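/- arXiv:2101.12459 — 9 statements merged into one kernel-verified Lean document; each statement's English description precedes it below -/
import Mathlib

section
/- The Kullback-Leibler divergence between two univariate Cauchy distributions is symmetric: for all l1, l2 ∈ ℝ and s1, s2 > 0, D_KL(p_{l1,s1} : p_{l2,s2}) = D_KL(p_{l2,s2} : p_{l1,s1}). -/
open MeasureTheory Real

noncomputable def cauchyPdf (l s x : ℝ) : ℝ := s / (Real.pi * (s ^ 2 + (x - l) ^ 2))

set_option maxHeartbeats 1000000 in
lemma keyA (l s s' t z : ℝ) (hs : 0 < s) (hs' : 0 < s') (hz : z ≠ 0) :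
    (s*s'*(1+t^2)/z^2) * cauchyPdf l s ((l + s*t) - s*s'*(1+t^2)/z)
      = cauchyPdf (l + s*t + s'*t) s' (l + s*t + z) := by
  have hpi := Real.pi_ne_zero
  have h1 : s ^ 2 + ((l + s*t - s*s'*(1+t^2)/z) - l) ^ 2 ≠ 0 := by positivity
  have h2 : s' ^ 2 + ((l + s*t + z) - (l + s*t + s'*t)) ^ 2 ≠ 0 := by positivity
  unfold cauchyPdf
  field_simp
  ring

lemma cauchyPdf_pos (l s x : ℝ) (hs : 0 < s) : 0 < cauchyPdf l s x := by
  unfold cauchyPdf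
  have := Real.pi_pos
  positivity

theorem kl_cauchy_symm (l₁ l₂ s₁ s₂ : ℝ) (hs₁ : 0 < s₁) (hs₂ : 0 < s₂) :
    ∫ x : ℝ, cauchyPdf l₁ s₁ x * Real.log (cauchyPdf l₁ s₁ x / cauchyPdf l₂ s₂ x)
      = ∫ x : ℝ, cauchyPdf l₂ s₂ x * Real.log (cauchyPdf l₂ s₂ x / cauchyPdf l₁ s₁ x) := by
  set t : ℝ := (l₂ - l₁) / (s₁ + s₂) with ht
  set u : ℝ := l₁ + s₁ * t with hu
  set w : ℝ := s₁ * s₂ * (1 + t ^ 2) with hwdef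
  have hσ : s₁ + s₂ ≠ 0 := by positivity
  have hl₂ : l₂ = u + s₂ * t := by
    rw [hu, ht]; field_simp; ring
  have hw : 0 < w := by rw [hwdef]; positivity
  set φ : ℝ → ℝ := fun x => u - w / (x - u) with hφ
  have hφne : ∀ x : ℝ, x ≠ u → φ x ≠ u := by
    intro x hx
    have hxu : x - u ≠ 0 := sub_ne_zero.mpr hx
    simp only [hφ]
    intro h
    have h2 : w / (x - u) = 0 := by linarith [sub_eq_zero.mpr h]
    rw [div_eq_zero_iff] at h2
    rcases h2 with h2 | h2
    · exact hw.ne' h2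
    · exact hxu h2
  have hinv : ∀ x : ℝ, x ≠ u → φ (φ x) = x := by
    intro x hx
    have hxu : x - u ≠ 0 := sub_ne_zero.mpr hx
    have hw0 : w ≠ 0 := hw.ne'
    have h5 : φ x - u = -(w / (x - u)) := by simp only [hφ]; ring
    simp only [hφ] at h5 ⊢
    rw [show u - w / (x - u) - u = -(w / (x - u)) by ring]
    rw [div_neg, div_div_eq_mul_div, mul_comm, mul_div_assoc, div_self hw0, mul_one]
    ring
  have hmeas : MeasurableSet ({u}ᶜ : Set ℝ) := (measurableSet_singleton u).compl
  have himg : φ '' ({u}ᶜ : Set ℝ) = ({u}ᶜ : Set ℝ) := by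
    apply Set.Subset.antisymm
    · rintro _ ⟨x, hx, rfl⟩
      exact hφne x hx
    · intro x hx
      exact ⟨φ x, hφne x hx, hinv x hx⟩
  have hinj : Set.InjOn φ ({u}ᶜ : Set ℝ) := by
    intro a ha b hb hab
    have h := congrArg φ hab
    rwa [hinv a ha, hinv b hb] at h
  have hderiv : ∀ x ∈ ({u}ᶜ : Set ℝ),
      HasDerivWithinAt φ (w / (x - u) ^ 2) ({u}ᶜ : Set ℝ) x := by
    intro x hx
    have hxu : x - u ≠ 0 := sub_ne_zero.mpr hx
    have h1 : HasDerivAt (fun y : ℝ => y - u) 1 x := (hasDerivAt_id x).sub_const u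
    have h2 := (h1.inv hxu).const_mul w
    have h3 := h2.const_sub u
    have h4 : HasDerivAt φ (w / (x - u) ^ 2) x := by
      rw [show w / (x - u) ^ 2 = -(w * (-1 / (x - u) ^ 2)) by field_simp]
      exact h3
    exact h4.hasDerivWithinAt
  have haecompl : ({u}ᶜ : Set ℝ) =ᵐ[volume] (Set.univ : Set ℝ) := by
    rw [MeasureTheory.ae_eq_univ, compl_compl]
    exact measure_singleton u
  have hcompl : ∀ F : ℝ → ℝ, ∫ x : ℝ, F x = ∫ x in ({u}ᶜ : Set ℝ), F x := by
    intro F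
    rw [← setIntegral_univ]
    exact setIntegral_congr_set haecompl.symm
  set F : ℝ → ℝ := fun x => cauchyPdf l₁ s₁ x * Real.log (cauchyPdf l₁ s₁ x / cauchyPdf l₂ s₂ x) with hF
  set G : ℝ → ℝ := fun x => cauchyPdf l₂ s₂ x * Real.log (cauchyPdf l₂ s₂ x / cauchyPdf l₁ s₁ x) with hG
  have hchange : ∫ x in ({u}ᶜ : Set ℝ), F x
      = ∫ x in ({u}ᶜ : Set ℝ), |w / (x - u) ^ 2| • F (φ x) := by
    nth_rewrite 1 [← himg]
    exact integral_image_eq_integral_abs_deriv_smul hmeas hderiv hinj F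
  have hpt : ∀ x ∈ ({u}ᶜ : Set ℝ), |w / (x - u) ^ 2| • F (φ x) = G x := by
    intro x hx
    have hxu : x - u ≠ 0 := sub_ne_zero.mpr hx
    have hfacpos : 0 < w / (x - u) ^ 2 := by positivity
    have hfac : w / (x - u) ^ 2 ≠ 0 := hfacpos.ne'
    -- the two key identities
    have A1 := keyA l₁ s₁ s₂ t (x - u) hs₁ hs₂ hxu
    have A2 := keyA l₂ s₂ s₁ (-t) (x - u) hs₂ hs₁ hxu
    rw [show l₂ + s₂ * (-t) = u by rw [hl₂]; ring] at A2
    rw [show s₂ * s₁ * (1 + (-t) ^ 2) = w by rw [hwdef]; ring] at A2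
    rw [show u + s₁ * (-t) = l₁ by rw [hu]; ring] at A2
    rw [← hu] at A1
    rw [← hl₂] at A1
    rw [show u + (x - u) = x by ring] at A1 A2
    -- A1 : w / (x-u)^2 * cauchyPdf l₁ s₁ (u - w/(x-u)) = cauchyPdf l₂ s₂ x
    -- A2 : w / (x-u)^2 * cauchyPdf l₂ s₂ (u - w/(x-u)) = cauchyPdf l₁ s₁ x
    have hφx : φ x = u - w / (x - u) := rfl
    have hratio : cauchyPdf l₁ s₁ (φ x) / cauchyPdf l₂ s₂ (φ x)
        = cauchyPdf l₂ s₂ x / cauchyPdf l₁ s₁ x := by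
      rw [hφx, ← A1, ← A2, mul_div_mul_left _ _ hfac]
    rw [smul_eq_mul, abs_of_pos hfacpos, hF, hG]
    simp only
    rw [hratio, ← mul_assoc, hφx, A1]
  calc ∫ x : ℝ, F x = ∫ x in ({u}ᶜ : Set ℝ), F x := hcompl F
    _ = ∫ x in ({u}ᶜ : Set ℝ), |w / (x - u) ^ 2| • F (φ x) := hchange
    _ = ∫ x in ({u}ᶜ : Set ℝ), G x := setIntegral_congr_fun hmeas hpt
    _ = ∫ x : ℝ, G x := (hcompl G).symm
end

section
/- For all l1, l2 ∈ ℝ and s1, s2 > 0, the Neyman chi-squared divergence between Cauchy densities satisfies ∫_ℝ (p_{l1,s1}(x) - p_{l2,s2}(x))^2 / p_{l2,s2}(x) dx = ((l1-l2)^2 + (s1-s2)^2)/(2*s1*s2). -/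
open MeasureTheory Real

open Filter Topology


lemma ftc_line {f F : ℝ → ℝ} (hF : ∀ x, HasDerivAt F (f x) x) (hf : Integrable f)
    {L1 L2 : ℝ} (h1 : Tendsto F atBot (𝓝 L1)) (h2 : Tendsto F atTop (𝓝 L2)) :
    ∫ x : ℝ, f x = L2 - L1 := by
  have key : Tendsto (fun R : ℝ => ∫ x in (-R)..R, f x) atTop (𝓝 (∫ x : ℝ, f x)) :=
    intervalIntegral_tendsto_integral hf tendsto_neg_atTop_atBot tendsto_id
  have eq : ∀ R : ℝ, ∫ x in (-R)..R, f x = F R - F (-R) := fun R =>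
    intervalIntegral.integral_eq_sub_of_hasDerivAt (fun x _ => hF x)
      hf.intervalIntegrable
  have key2 : Tendsto (fun R : ℝ => F R - F (-R)) atTop (𝓝 (L2 - L1)) :=
    h2.sub (h1.comp tendsto_neg_atTop_atBot)
  exact tendsto_nhds_unique (key.congr (fun R => eq R)) key2

lemma one_add_sq_pos (x : ℝ) : (0:ℝ) < 1 + x ^ 2 := by positivity

lemma intgA : Integrable (fun x : ℝ => ((1 + x ^ 2) ^ 2)⁻¹) := by
  refine integrable_inv_one_add_sq.mono ?_ ?_
  · exact (measurable_const.add (measurable_id.pow_const 2)).pow_const 2 |>.inv.aestronglyMeasurable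
  · refine Filter.Eventually.of_forall fun x => ?_
    have h := one_add_sq_pos x
    rw [norm_inv, norm_inv, Real.norm_of_nonneg (by positivity), Real.norm_of_nonneg (by positivity)]
    apply inv_anti₀ h
    nlinarith [sq_nonneg x]

lemma intgB : Integrable (fun x : ℝ => x / (1 + x ^ 2) ^ 2) := by
  refine integrable_inv_one_add_sq.mono ?_ ?_
  · exact (measurable_id.div ((measurable_const.add (measurable_id.pow_const 2)).pow_const 2)).aestronglyMeasurable
  · refine Filter.Eventually.of_forall fun x => ?_
    have h := one_add_sq_pos x
    rw [Real.norm_eq_abs, Real.norm_eq_abs, abs_div, abs_of_nonneg (by positivity : (0:ℝ) ≤ (1+x^2)^2),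
      abs_of_nonneg (le_of_lt (by positivity : (0:ℝ) < ((1+x^2))⁻¹))]
    rw [div_le_iff₀ (by positivity), inv_mul_eq_div, le_div_iff₀ h]
    nlinarith [abs_nonneg x, sq_abs x, sq_nonneg (|x| - 1), sq_nonneg x]

lemma intgC : Integrable (fun x : ℝ => x ^ 2 / (1 + x ^ 2) ^ 2) := by
  refine integrable_inv_one_add_sq.mono ?_ ?_
  · exact ((measurable_id.pow_const 2).div ((measurable_const.add (measurable_id.pow_const 2)).pow_const 2)).aestronglyMeasurable
  · refine Filter.Eventually.of_forall fun x => ?_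
    have h := one_add_sq_pos x
    rw [Real.norm_eq_abs, Real.norm_eq_abs, abs_of_nonneg (by positivity : (0:ℝ) ≤ x^2/(1+x^2)^2),
      abs_of_nonneg (le_of_lt (by positivity : (0:ℝ) < ((1+x^2))⁻¹))]
    rw [div_le_iff₀ (by positivity), inv_mul_eq_div, le_div_iff₀ h]
    nlinarith [sq_nonneg x]


lemma tendsto_inv_atBot_zero' : Filter.Tendsto (fun x : ℝ => x⁻¹) Filter.atBot (𝓝 0) := by
  have h0 : Filter.Tendsto (fun x : ℝ => x⁻¹) Filter.atTop (𝓝 0) := tendsto_inv_atTop_zero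
  have h1 : Filter.Tendsto (fun x : ℝ => (-x)⁻¹) Filter.atBot (𝓝 (0:ℝ)) :=
    h0.comp tendsto_neg_atBot_atTop
  have h2 := h1.neg
  rw [neg_zero] at h2
  refine h2.congr fun x => ?_
  rw [inv_neg, neg_neg]

lemma aux_tend {l : Filter ℝ} (h : Filter.Tendsto (fun x : ℝ => x⁻¹) l (𝓝 0))
    (h' : ∀ᶠ x in l, x ≠ 0) :
    Filter.Tendsto (fun x : ℝ => x / (2 * (1 + x ^ 2))) l (𝓝 0) := by
  have t2 : Filter.Tendsto (fun x : ℝ => (2 * ((x⁻¹) ^ 2 + 1))⁻¹) l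
      (𝓝 ((2 * ((0:ℝ) ^ 2 + 1))⁻¹)) :=
    (((h.pow 2).add_const 1).const_mul 2).inv₀ (by norm_num)
  have t3 := h.mul t2
  rw [zero_mul] at t3
  refine Filter.Tendsto.congr' ?_ t3
  filter_upwards [h'] with x hx
  have hx2 : (0:ℝ) < 1 + x ^ 2 := by positivity
  field_simp

lemma intA : ∫ x : ℝ, ((1 + x ^ 2) ^ 2)⁻¹ = π / 2 := by
  have hder : ∀ x : ℝ, HasDerivAt (fun x : ℝ => x / (2 * (1 + x ^ 2)) + arctan x / 2)
      (((1 + x ^ 2) ^ 2)⁻¹) x := by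
    intro x
    have h := one_add_sq_pos x
    have h1 : HasDerivAt (fun x : ℝ => x / (2 * (1 + x ^ 2)))
        (((2 * (1 + x^2)) - x * (2 * (2*x))) / (2 * (1 + x ^ 2))^2) x := by
      have hu : HasDerivAt (fun x : ℝ => (2 : ℝ) * (1 + x ^ 2)) (2 * (2 * x)) x := by
        have : HasDerivAt (fun x : ℝ => 1 + x ^ 2) (2 * x) x := by
          simpa using (hasDerivAt_pow 2 x).const_add 1
        simpa using this.const_mul 2
      exact ((hasDerivAt_id' x).div hu (by positivity)).congr_deriv (by ring)
    have h2 : HasDerivAt (fun x : ℝ => arctan x / 2) ((1 + x ^ 2)⁻¹ / 2) x := by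
      simpa [one_div] using (Real.hasDerivAt_arctan x).div_const 2
    refine (h1.add h2).congr_deriv ?_
    field_simp
    ring
  have h1 : Tendsto (fun x : ℝ => x / (2 * (1 + x ^ 2)) + arctan x / 2) atBot (𝓝 (0 + (-(π/2))/2)) := by
    apply Tendsto.add
    · exact aux_tend tendsto_inv_atBot_zero' (eventually_lt_atBot 0 |>.mono fun x hx => ne_of_lt hx)
    · exact (tendsto_arctan_atBot.mono_right nhdsWithin_le_nhds).div_const 2
  have h2 : Tendsto (fun x : ℝ => x / (2 * (1 + x ^ 2)) + arctan x / 2) atTop (𝓝 (0 + (π/2)/2)) := by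
    apply Tendsto.add
    · exact aux_tend tendsto_inv_atTop_zero (eventually_gt_atTop 0 |>.mono fun x hx => ne_of_gt hx)
    · exact (tendsto_arctan_atTop.mono_right nhdsWithin_le_nhds).div_const 2
  have := ftc_line hder intgA h1 h2
  rw [this]; ring

lemma intB : ∫ x : ℝ, x / (1 + x ^ 2) ^ 2 = 0 := by
  have hder : ∀ x : ℝ, HasDerivAt (fun x : ℝ => -(2 * (1 + x ^ 2))⁻¹)
      (x / (1 + x ^ 2) ^ 2) x := by
    intro x
    have h := one_add_sq_pos x
    have hu : HasDerivAt (fun x : ℝ => (2 : ℝ) * (1 + x ^ 2)) (2 * (2 * x)) x := by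
      have : HasDerivAt (fun x : ℝ => 1 + x ^ 2) (2 * x) x := by
        simpa using (hasDerivAt_pow 2 x).const_add 1
      simpa using this.const_mul 2
    have := (hu.inv (by positivity)).neg
    refine this.congr_deriv ?_
    field_simp
  have h0 : Filter.Tendsto (fun x : ℝ => x⁻¹) Filter.atTop (𝓝 0) := tendsto_inv_atTop_zero
  have gtop : Filter.Tendsto (fun x : ℝ => 2 * (1 + x ^ 2)) Filter.atTop Filter.atTop :=
    Filter.tendsto_atTop_mono (fun x => by simp only [id_eq]; nlinarith [sq_nonneg (2*x - 1)]) Filter.tendsto_id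
  have gbot : Filter.Tendsto (fun x : ℝ => 2 * (1 + x ^ 2)) Filter.atBot Filter.atTop :=
    Filter.tendsto_atTop_mono (fun x => by nlinarith [sq_nonneg (2*x + 1)]) tendsto_neg_atBot_atTop
  have ht : Filter.Tendsto (fun x : ℝ => -(2 * (1 + x ^ 2))⁻¹) Filter.atTop (𝓝 (-0)) :=
    (h0.comp gtop).neg
  have hb : Filter.Tendsto (fun x : ℝ => -(2 * (1 + x ^ 2))⁻¹) Filter.atBot (𝓝 (-0)) :=
    (h0.comp gbot).neg
  rw [neg_zero] at ht hb
  have := ftc_line hder intgB hb ht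
  rw [this]; ring

lemma intC : ∫ x : ℝ, x ^ 2 / (1 + x ^ 2) ^ 2 = π / 2 := by
  have heq : (fun x : ℝ => x ^ 2 / (1 + x ^ 2) ^ 2)
      = fun x => (1 + x ^ 2)⁻¹ - ((1 + x ^ 2) ^ 2)⁻¹ := by
    funext x
    have := one_add_sq_pos x
    field_simp
    ring
  rw [heq, integral_sub integrable_inv_one_add_sq intgA, integral_univ_inv_one_add_sq, intA]
  ring

lemma polyEq (c0 c1 c2 : ℝ) : (fun x : ℝ => (c0 + c1 * x + c2 * x ^ 2) / (1 + x ^ 2) ^ 2)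
    = fun x => c0 * ((1 + x ^ 2) ^ 2)⁻¹ + c1 * (x / (1 + x ^ 2) ^ 2)
        + c2 * (x ^ 2 / (1 + x ^ 2) ^ 2) := by
  funext x
  have := one_add_sq_pos x
  field_simp

lemma intgPoly (c0 c1 c2 : ℝ) :
    Integrable (fun x : ℝ => (c0 + c1 * x + c2 * x ^ 2) / (1 + x ^ 2) ^ 2) := by
  rw [polyEq]
  exact ((intgA.const_mul c0).add (intgB.const_mul c1)).add (intgC.const_mul c2)

lemma intPoly (c0 c1 c2 : ℝ) :
    ∫ x : ℝ, (c0 + c1 * x + c2 * x ^ 2) / (1 + x ^ 2) ^ 2 = (c0 + c2) * (π / 2) := by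
  have i1 : Integrable (fun x : ℝ => c0 * ((1 + x ^ 2) ^ 2)⁻¹ + c1 * (x / (1 + x ^ 2) ^ 2)) :=
    (intgA.const_mul c0).add (intgB.const_mul c1)
  have i2 : Integrable (fun x : ℝ => c2 * (x ^ 2 / (1 + x ^ 2) ^ 2)) := intgC.const_mul c2
  rw [polyEq, integral_add i1 i2,
    integral_add (intgA.const_mul c0) (intgB.const_mul c1), integral_const_mul,
    integral_const_mul, integral_const_mul, intA, intB, intC]
  ring

lemma integrable_comp_affine {g : ℝ → ℝ} (hg : Integrable g) (l s : ℝ) (hs : s ≠ 0) :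
    Integrable (fun x : ℝ => g ((x - l) / s)) :=
  (hg.comp_div hs).comp_sub_right l

lemma integral_comp_affine (g : ℝ → ℝ) (l s : ℝ) (hs : 0 < s) :
    ∫ x : ℝ, g ((x - l) / s) = s * ∫ u : ℝ, g u := by
  have h1 : ∫ x : ℝ, (fun y : ℝ => g (y / s)) (x - l) = ∫ x : ℝ, g (x / s) :=
    integral_sub_right_eq_self (fun y : ℝ => g (y / s)) l
  simpa [MeasureTheory.Measure.integral_comp_div g s, abs_of_pos hs] using h1

lemma cauchy_eq {l s : ℝ} (hs : 0 < s) : cauchyPdf l s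
    = fun x => (π * s)⁻¹ * (1 + ((x - l) / s) ^ 2)⁻¹ := by
  funext x
  unfold cauchyPdf
  have hpi := Real.pi_pos
  have h : (0:ℝ) < s ^ 2 + (x - l) ^ 2 := by positivity
  field_simp

lemma integrable_cauchy {l s : ℝ} (hs : 0 < s) : Integrable (cauchyPdf l s) := by
  rw [cauchy_eq hs]
  exact (integrable_comp_affine integrable_inv_one_add_sq l s hs.ne').const_mul _

lemma integral_cauchy {l s : ℝ} (hs : 0 < s) : ∫ x : ℝ, cauchyPdf l s x = 1 := by
  rw [cauchy_eq hs]
  rw [MeasureTheory.integral_const_mul,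
    integral_comp_affine (fun u : ℝ => (1 + u ^ 2)⁻¹) l s hs,
    integral_univ_inv_one_add_sq]
  have hpi := Real.pi_pos
  field_simp

theorem neyman_chi_sq_cauchy (l₁ l₂ s₁ s₂ : ℝ) (hs₁ : 0 < s₁) (hs₂ : 0 < s₂) :
    ∫ x : ℝ, (cauchyPdf l₁ s₁ x - cauchyPdf l₂ s₂ x) ^ 2 / cauchyPdf l₂ s₂ x
      = ((l₁ - l₂) ^ 2 + (s₁ - s₂) ^ 2) / (2 * s₁ * s₂) := by
  have hpi := Real.pi_pos
  set d : ℝ := l₁ - l₂ with hd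
  set q : ℝ → ℝ := fun u =>
    ((s₂ ^ 2 + d ^ 2) + (2 * s₁ * d) * u + s₁ ^ 2 * u ^ 2) / (1 + u ^ 2) ^ 2 with hq
  have hq_int : Integrable q := intgPoly _ _ _
  have hq_val : ∫ u : ℝ, q u = ((s₂ ^ 2 + d ^ 2) + s₁ ^ 2) * (π / 2) := intPoly _ _ _
  have hratio : ∀ x : ℝ, cauchyPdf l₁ s₁ x ^ 2 / cauchyPdf l₂ s₂ x
      = (π * s₁ ^ 2 * s₂)⁻¹ * q ((x - l₁) / s₁) := by
    intro x
    unfold cauchyPdf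
    rw [hq]
    have h1 : (0:ℝ) < s₁ ^ 2 + (x - l₁) ^ 2 := by positivity
    have h2 : (0:ℝ) < s₂ ^ 2 + (x - l₂) ^ 2 := by positivity
    have h3 : (0:ℝ) < 1 + ((x - l₁) / s₁) ^ 2 := by positivity
    rw [hd]
    field_simp
    ring
  have hpoint : ∀ x : ℝ,
      (cauchyPdf l₁ s₁ x - cauchyPdf l₂ s₂ x) ^ 2 / cauchyPdf l₂ s₂ x
        = (π * s₁ ^ 2 * s₂)⁻¹ * q ((x - l₁) / s₁) - 2 * cauchyPdf l₁ s₁ x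
            + cauchyPdf l₂ s₂ x := by
    intro x
    rw [← hratio]
    have h2 : cauchyPdf l₂ s₂ x ≠ 0 := by
      unfold cauchyPdf
      have h2' : (0:ℝ) < s₂ ^ 2 + (x - l₂) ^ 2 := by positivity
      positivity
    field_simp
    ring
  have i1 : Integrable (fun x : ℝ => (π * s₁ ^ 2 * s₂)⁻¹ * q ((x - l₁) / s₁)) :=
    (integrable_comp_affine hq_int l₁ s₁ hs₁.ne').const_mul _
  have i2 : Integrable (fun x : ℝ => 2 * cauchyPdf l₁ s₁ x) :=
    (integrable_cauchy hs₁).const_mul 2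
  have i3 : Integrable (cauchyPdf l₂ s₂) := integrable_cauchy hs₂
  calc ∫ x : ℝ, (cauchyPdf l₁ s₁ x - cauchyPdf l₂ s₂ x) ^ 2 / cauchyPdf l₂ s₂ x
      = ∫ x : ℝ, ((π * s₁ ^ 2 * s₂)⁻¹ * q ((x - l₁) / s₁) - 2 * cauchyPdf l₁ s₁ x
          + cauchyPdf l₂ s₂ x) := by
        exact congrArg _ (funext hpoint)
    _ = ((∫ x : ℝ, (π * s₁ ^ 2 * s₂)⁻¹ * q ((x - l₁) / s₁))
          - ∫ x : ℝ, 2 * cauchyPdf l₁ s₁ x) + ∫ x : ℝ, cauchyPdf l₂ s₂ x := by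
        have i12 : Integrable (fun x : ℝ => (π * s₁ ^ 2 * s₂)⁻¹ * q ((x - l₁) / s₁)
            - 2 * cauchyPdf l₁ s₁ x) := i1.sub i2
        rw [integral_add i12 i3, integral_sub i1 i2]
    _ = (π * s₁ ^ 2 * s₂)⁻¹ * (s₁ * (((s₂ ^ 2 + d ^ 2) + s₁ ^ 2) * (π / 2))) - 2 * 1 + 1 := by
        rw [MeasureTheory.integral_const_mul, integral_comp_affine q l₁ s₁ hs₁, hq_val,
          MeasureTheory.integral_const_mul, integral_cauchy hs₁, integral_cauchy hs₂]
    _ = ((l₁ - l₂) ^ 2 + (s₁ - s₂) ^ 2) / (2 * s₁ * s₂) := by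
        rw [← hd]
        field_simp
        ring
end

section
/- For all l1, l2 ∈ ℝ and s1, s2 > 0, the Neyman and Pearson chi-squared divergences between Cauchy densities coincide: ∫_ℝ (p_{l1,s1}(x) - p_{l2,s2}(x))^2 / p_{l2,s2}(x) dx = ∫_ℝ (p_{l1,s1}(x) - p_{l2,s2}(x))^2 / p_{l1,s1}(x) dx. -/
open MeasureTheory Real

lemma cauchy_key (l₁ l₂ s₁ s₂ u w x : ℝ) (hs₁ : 0 < s₁) (hs₂ : 0 < s₂)
    (hu : u = (l₁ * s₂ + l₂ * s₁) / (s₁ + s₂))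
    (hw : w = s₁ * s₂ * ((s₁ + s₂) ^ 2 + (l₁ - l₂) ^ 2) / (s₁ + s₂) ^ 2)
    (hx : x ≠ u) :
    cauchyPdf l₁ s₁ (u - w / (x - u)) * (w / (x - u) ^ 2) = cauchyPdf l₂ s₂ x := by
  have hss : (0:ℝ) < s₁ + s₂ := by linarith
  have hxu : x - u ≠ 0 := sub_ne_zero.mpr hx
  have hxu2 : (0:ℝ) < (x - u) ^ 2 := lt_of_le_of_ne (sq_nonneg _) (Ne.symm (pow_ne_zero _ hxu))
  have hpi : (Real.pi) ≠ 0 := Real.pi_ne_zero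
  have hA : (0:ℝ) < s₁ ^ 2 * (x - u) ^ 2 + ((u - l₁) * (x - u) - w) ^ 2 := by
    have := mul_pos (pow_pos hs₁ 2) hxu2
    nlinarith [sq_nonneg ((u - l₁) * (x - u) - w)]
  have hB : (0:ℝ) < s₂ ^ 2 + (x - l₂) ^ 2 := by positivity
  have step : cauchyPdf l₁ s₁ (u - w / (x - u)) * (w / (x - u) ^ 2)
      = s₁ * w / (Real.pi * (s₁ ^ 2 * (x - u) ^ 2 + ((u - l₁) * (x - u) - w) ^ 2)) := by
    unfold cauchyPdf
    rw [div_mul_div_comm, div_eq_div_iff (by positivity) (by positivity)]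
    field_simp
    try ring
    try simp
  rw [step]
  unfold cauchyPdf
  rw [div_eq_div_iff (by positivity) (by positivity)]
  subst hu hw
  field_simp
  ring

theorem neyman_eq_pearson_chi_sq_cauchy (l₁ l₂ s₁ s₂ : ℝ) (hs₁ : 0 < s₁) (hs₂ : 0 < s₂) :
    ∫ x : ℝ, (cauchyPdf l₁ s₁ x - cauchyPdf l₂ s₂ x) ^ 2 / cauchyPdf l₂ s₂ x
      = ∫ x : ℝ, (cauchyPdf l₁ s₁ x - cauchyPdf l₂ s₂ x) ^ 2 / cauchyPdf l₁ s₁ x := by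
  have hss : (0:ℝ) < s₁ + s₂ := by linarith
  set u : ℝ := (l₁ * s₂ + l₂ * s₁) / (s₁ + s₂) with hu
  set w : ℝ := s₁ * s₂ * ((s₁ + s₂) ^ 2 + (l₁ - l₂) ^ 2) / (s₁ + s₂) ^ 2 with hw
  have hw0 : 0 < w := by rw [hw]; positivity
  set T : ℝ → ℝ := fun y => u - w / (y - u) with hT
  set s : Set ℝ := {u}ᶜ with hsdef
  have hs : MeasurableSet s := (measurableSet_singleton u).compl
  have hmem : ∀ x ∈ s, x ≠ u := fun x hx => hx
  have hTmem : ∀ x ∈ s, T x ∈ s := by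
    intro x hx
    have hxu : x - u ≠ 0 := sub_ne_zero.mpr (hmem x hx)
    have : w / (x - u) ≠ 0 := div_ne_zero (ne_of_gt hw0) hxu
    simp only [hsdef, Set.mem_compl_iff, Set.mem_singleton_iff, hT]
    intro h
    apply this
    linarith [h]
  have hTT : ∀ x ∈ s, T (T x) = x := by
    intro x hx
    have hxu : x - u ≠ 0 := sub_ne_zero.mpr (hmem x hx)
    simp only [hT]
    field_simp
    rw [show u * (x - u) - w - u * (x - u) = -w from by ring]
    field_simp [hw0.ne']
    ring
  have hinj : Set.InjOn T s := by
    intro x hx y hy hxy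
    rw [← hTT x hx, ← hTT y hy, hxy]
  have himg : T '' s = s := by
    apply Set.Subset.antisymm
    · rintro _ ⟨x, hx, rfl⟩; exact hTmem x hx
    · intro x hx
      exact ⟨T x, hTmem x hx, hTT x hx⟩
  have hderiv : ∀ x ∈ s, HasDerivWithinAt T (w / (x - u) ^ 2) s x := by
    intro x hx
    have hxu : x - u ≠ 0 := sub_ne_zero.mpr (hmem x hx)
    have h1 : HasDerivAt (fun y : ℝ => y - u) 1 x := (hasDerivAt_id x).sub_const u
    have h2 := ((h1.inv hxu).const_mul w).const_sub u
    have heq : T = fun y : ℝ => u - w * (y - u)⁻¹ := by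
      funext y; simp [hT, div_eq_mul_inv]
    rw [heq]
    rw [show w / (x - u) ^ 2 = -(w * (-1 / (x - u) ^ 2)) by ring]
    exact h2.hasDerivWithinAt
  -- the pointwise identity on s
  have hpw : ∀ x ∈ s,
      |w / (x - u) ^ 2| • ((cauchyPdf l₁ s₁ (T x) - cauchyPdf l₂ s₂ (T x)) ^ 2 / cauchyPdf l₂ s₂ (T x))
      = (cauchyPdf l₁ s₁ x - cauchyPdf l₂ s₂ x) ^ 2 / cauchyPdf l₁ s₁ x := by
    intro x hx
    have hxu : x - u ≠ 0 := sub_ne_zero.mpr (hmem x hx)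
    have hxu2 : (0:ℝ) < (x - u) ^ 2 := lt_of_le_of_ne (sq_nonneg _) (Ne.symm (pow_ne_zero _ hxu))
    have hd : 0 < w / (x - u) ^ 2 := div_pos hw0 hxu2
    have e1 : cauchyPdf l₁ s₁ (T x) * (w / (x - u) ^ 2) = cauchyPdf l₂ s₂ x :=
      cauchy_key l₁ l₂ s₁ s₂ u w x hs₁ hs₂ hu hw (hmem x hx)
    have e2 : cauchyPdf l₂ s₂ (T x) * (w / (x - u) ^ 2) = cauchyPdf l₁ s₁ x := by
      refine cauchy_key l₂ l₁ s₂ s₁ u w x hs₂ hs₁ (by rw [hu]; ring_nf) (by rw [hw]; ring_nf) (hmem x hx)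
    have hb : 0 < cauchyPdf l₂ s₂ (T x) := cauchyPdf_pos _ _ _ hs₂
    rw [smul_eq_mul, abs_of_pos hd, ← e1, ← e2]
    field_simp
    ring
  calc ∫ x : ℝ, (cauchyPdf l₁ s₁ x - cauchyPdf l₂ s₂ x) ^ 2 / cauchyPdf l₂ s₂ x
      = ∫ x in s, (cauchyPdf l₁ s₁ x - cauchyPdf l₂ s₂ x) ^ 2 / cauchyPdf l₂ s₂ x := by
        rw [hsdef, restrict_compl_singleton]
    _ = ∫ x in T '' s, (cauchyPdf l₁ s₁ x - cauchyPdf l₂ s₂ x) ^ 2 / cauchyPdf l₂ s₂ x := by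
        rw [himg]
    _ = ∫ x in s, |w / (x - u) ^ 2| •
          ((cauchyPdf l₁ s₁ (T x) - cauchyPdf l₂ s₂ (T x)) ^ 2 / cauchyPdf l₂ s₂ (T x)) := by
        exact integral_image_eq_integral_abs_deriv_smul hs hderiv hinj _
    _ = ∫ x in s, (cauchyPdf l₁ s₁ x - cauchyPdf l₂ s₂ x) ^ 2 / cauchyPdf l₁ s₁ x := by
        exact setIntegral_congr_fun hs hpw
    _ = ∫ x : ℝ, (cauchyPdf l₁ s₁ x - cauchyPdf l₂ s₂ x) ^ 2 / cauchyPdf l₁ s₁ x := by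
        rw [hsdef, restrict_compl_singleton]
end

section
/- For all l1, l2 ∈ ℝ and s > 0 with l1 ≠ l2, the total variation distance between two Cauchy densities with equal scale satisfies (1/2) * ∫_ℝ |p_{l1,s}(x) - p_{l2,s}(x)| dx = (2/π) * arctan(|l2 - l1|/(2*s)). -/
open MeasureTheory Real Filter Set

lemma cauchy_hasDerivAt (l s : ℝ) (hs : 0 < s) (x : ℝ) :
    HasDerivAt (fun x => (1 / Real.pi) * Real.arctan ((x - l) / s)) (cauchyPdf l s x) x := by
  have h1 : HasDerivAt (fun x : ℝ => (x - l) / s) (1 / s) x := by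
    simpa using ((hasDerivAt_id x).sub_const l).div_const s
  have h2 := (Real.hasDerivAt_arctan ((x - l) / s)).comp x h1
  have h3 := h2.const_mul (1 / Real.pi)
  refine h3.congr_deriv ?_
  have hpi := Real.pi_pos
  have hden : (1 : ℝ) + ((x - l) / s) ^ 2 ≠ 0 := by positivity
  unfold cauchyPdf
  field_simp

lemma cauchy_integrable (l s : ℝ) (hs : 0 < s) : Integrable (cauchyPdf l s) := by
  have h : cauchyPdf l s = fun x => (1 / (Real.pi * s)) * ((1 + ((x - l) / s) ^ 2)⁻¹) := by
    funext x
    have hpi := Real.pi_pos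
    unfold cauchyPdf
    field_simp
  rw [h]
  exact ((integrable_inv_one_add_sq.comp_div hs.ne').comp_sub_right l).const_mul _

lemma cauchy_integral_Iic (l s m : ℝ) (hs : 0 < s) :
    ∫ x in Iic m, cauchyPdf l s x = (1 / Real.pi) * Real.arctan ((m - l) / s) + 1 / 2 := by
  have hlim : Tendsto (fun x => (1 / Real.pi) * Real.arctan ((x - l) / s)) atBot
      (nhds ((1 / Real.pi) * (-(Real.pi / 2)))) := by
    refine Tendsto.const_mul _ ?_
    refine (tendsto_nhds_of_tendsto_nhdsWithin Real.tendsto_arctan_atBot).comp ?_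
    exact (tendsto_atBot_add_const_right _ (-l) tendsto_id).atBot_div_const hs
  rw [integral_Iic_of_hasDerivAt_of_tendsto' (fun x _ => cauchy_hasDerivAt l s hs x)
    (cauchy_integrable l s hs).integrableOn hlim]
  have hpi := Real.pi_ne_zero
  field_simp
  ring

lemma cauchy_integral_Ioi (l s m : ℝ) (hs : 0 < s) :
    ∫ x in Ioi m, cauchyPdf l s x = 1 / 2 - (1 / Real.pi) * Real.arctan ((m - l) / s) := by
  have hlim : Tendsto (fun x => (1 / Real.pi) * Real.arctan ((x - l) / s)) atTop
      (nhds ((1 / Real.pi) * (Real.pi / 2))) := by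
    refine Tendsto.const_mul _ ?_
    refine (tendsto_nhds_of_tendsto_nhdsWithin Real.tendsto_arctan_atTop).comp ?_
    exact (tendsto_atTop_add_const_right _ (-l) tendsto_id).atTop_div_const hs
  rw [integral_Ioi_of_hasDerivAt_of_tendsto' (fun x _ => cauchy_hasDerivAt l s hs x)
    (cauchy_integrable l s hs).integrableOn hlim]
  have hpi := Real.pi_ne_zero
  field_simp

lemma tv_cauchy_aux (l₁ l₂ s : ℝ) (hs : 0 < s) (hl : l₁ < l₂) :
    (∫ x : ℝ, |cauchyPdf l₁ s x - cauchyPdf l₂ s x|)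
      = (4 / Real.pi) * Real.arctan ((l₂ - l₁) / (2 * s)) := by
  set m := (l₁ + l₂) / 2 with hm
  have hpi := Real.pi_pos
  have hint : Integrable (fun x => |cauchyPdf l₁ s x - cauchyPdf l₂ s x|) :=
    ((cauchy_integrable l₁ s hs).sub (cauchy_integrable l₂ s hs)).abs
  rw [← intervalIntegral.integral_Iic_add_Ioi (b := m) hint.integrableOn hint.integrableOn]
  have key : ∀ x : ℝ, cauchyPdf l₁ s x - cauchyPdf l₂ s x
      = s / Real.pi * ((s ^ 2 + (x - l₂) ^ 2 - (s ^ 2 + (x - l₁) ^ 2))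
        / ((s ^ 2 + (x - l₁) ^ 2) * (s ^ 2 + (x - l₂) ^ 2))) := by
    intro x
    have h1 : (0:ℝ) < s ^ 2 + (x - l₁) ^ 2 := by positivity
    have h2 : (0:ℝ) < s ^ 2 + (x - l₂) ^ 2 := by positivity
    unfold cauchyPdf
    field_simp
  have hIic : ∀ x ∈ Iic m, |cauchyPdf l₁ s x - cauchyPdf l₂ s x|
      = cauchyPdf l₁ s x - cauchyPdf l₂ s x := by
    intro x hx
    rw [abs_of_nonneg]
    rw [key x]
    have h1 : (0:ℝ) < s ^ 2 + (x - l₁) ^ 2 := by positivity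
    have h2 : (0:ℝ) < s ^ 2 + (x - l₂) ^ 2 := by positivity
    have hx' : x ≤ (l₁ + l₂) / 2 := hx
    have hnum : (0:ℝ) ≤ s ^ 2 + (x - l₂) ^ 2 - (s ^ 2 + (x - l₁) ^ 2) := by nlinarith
    positivity
  have hIoi : ∀ x ∈ Ioi m, |cauchyPdf l₁ s x - cauchyPdf l₂ s x|
      = cauchyPdf l₂ s x - cauchyPdf l₁ s x := by
    intro x hx
    rw [abs_sub_comm, abs_of_nonneg]
    have h1 : (0:ℝ) < s ^ 2 + (x - l₁) ^ 2 := by positivity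
    have h2 : (0:ℝ) < s ^ 2 + (x - l₂) ^ 2 := by positivity
    have hx' : (l₁ + l₂) / 2 < x := hx
    have hnum : (0:ℝ) ≤ s ^ 2 + (x - l₁) ^ 2 - (s ^ 2 + (x - l₂) ^ 2) := by nlinarith
    have h3 : cauchyPdf l₂ s x - cauchyPdf l₁ s x
        = s / Real.pi * ((s ^ 2 + (x - l₁) ^ 2 - (s ^ 2 + (x - l₂) ^ 2))
          / ((s ^ 2 + (x - l₁) ^ 2) * (s ^ 2 + (x - l₂) ^ 2))) := by
      rw [← neg_sub (cauchyPdf l₁ s x), key x]; ring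
    rw [h3]; positivity
  rw [setIntegral_congr_fun measurableSet_Iic hIic, setIntegral_congr_fun measurableSet_Ioi hIoi]
  rw [integral_sub ((cauchy_integrable l₁ s hs).integrableOn)
    ((cauchy_integrable l₂ s hs).integrableOn),
    integral_sub ((cauchy_integrable l₂ s hs).integrableOn)
    ((cauchy_integrable l₁ s hs).integrableOn)]
  rw [cauchy_integral_Iic l₁ s m hs, cauchy_integral_Iic l₂ s m hs,
    cauchy_integral_Ioi l₁ s m hs, cauchy_integral_Ioi l₂ s m hs]
  have e1 : (m - l₁) / s = (l₂ - l₁) / (2 * s) := by rw [hm]; field_simp; ring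
  have e2 : (m - l₂) / s = -((l₂ - l₁) / (2 * s)) := by rw [hm]; field_simp; ring
  rw [e1, e2, Real.arctan_neg]
  field_simp
  ring

theorem tv_cauchy_same_scale (l₁ l₂ s : ℝ) (hs : 0 < s) (hl : l₁ ≠ l₂) :
    (1 / 2) * ∫ x : ℝ, |cauchyPdf l₁ s x - cauchyPdf l₂ s x|
      = (2 / Real.pi) * Real.arctan (|l₂ - l₁| / (2 * s)) := by
  rcases lt_or_gt_of_ne hl with h | h
  · rw [tv_cauchy_aux l₁ l₂ s hs h, abs_of_pos (by linarith : (0:ℝ) < l₂ - l₁)]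
    ring
  · have : (fun x => |cauchyPdf l₁ s x - cauchyPdf l₂ s x|)
        = fun x => |cauchyPdf l₂ s x - cauchyPdf l₁ s x| := by
      funext x; rw [abs_sub_comm]
    rw [this, tv_cauchy_aux l₂ l₁ s hs h, abs_of_neg (by linarith : l₂ - l₁ < (0:ℝ))]
    rw [show -(l₂ - l₁) = l₁ - l₂ by ring]
    ring
end

section
/- For all l ∈ ℝ and s > 0, the LeCam-Vincze triangular divergence between a Cauchy density and the standard Cauchy density satisfies ∫_ℝ (p_{0,1}(x) - p_{l,s}(x))^2 / (p_{0,1}(x) + p_{l,s}(x)) dx = 2 - 4 * sqrt(s / (l^2 + s^2 + 2*s + 1)). -/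
open MeasureTheory Real

lemma inv_quad_eq (a d : ℝ) (ha : 0 < a) (hd : 0 < d) (x : ℝ) :
    (a * x ^ 2 + d)⁻¹ = d⁻¹ * (1 + (Real.sqrt (a / d) * x) ^ 2)⁻¹ := by
  have h : (Real.sqrt (a / d)) ^ 2 = a / d := Real.sq_sqrt (by positivity)
  rw [mul_pow, h, ← mul_inv]
  congr 1
  field_simp
  ring

lemma integrable_inv_quad (a d : ℝ) (ha : 0 < a) (hd : 0 < d) :
    Integrable (fun x : ℝ => (a * x ^ 2 + d)⁻¹) := by
  have hc : Real.sqrt (a / d) ≠ 0 := by positivity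
  have := (integrable_inv_one_add_sq.comp_mul_left' hc).const_mul d⁻¹
  exact this.congr (Filter.Eventually.of_forall fun x => (inv_quad_eq a d ha hd x).symm)

lemma integral_inv_quad (a d : ℝ) (ha : 0 < a) (hd : 0 < d) :
    ∫ x : ℝ, (a * x ^ 2 + d)⁻¹ = π / Real.sqrt (a * d) := by
  have hc : (0:ℝ) < Real.sqrt (a / d) := by positivity
  calc ∫ x : ℝ, (a * x ^ 2 + d)⁻¹
      = ∫ x : ℝ, d⁻¹ * (1 + (Real.sqrt (a / d) * x) ^ 2)⁻¹ := by
        congr 1; ext x; exact inv_quad_eq a d ha hd x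
    _ = d⁻¹ * ∫ x : ℝ, (1 + (Real.sqrt (a / d) * x) ^ 2)⁻¹ := integral_const_mul _ _
    _ = d⁻¹ * (|(Real.sqrt (a / d))⁻¹| • ∫ x : ℝ, (1 + x ^ 2)⁻¹) := by
        rw [MeasureTheory.Measure.integral_comp_mul_left (fun x => (1 + x ^ 2)⁻¹)]
    _ = π / Real.sqrt (a * d) := by
        rw [integral_univ_inv_one_add_sq, abs_inv, abs_of_pos hc, smul_eq_mul]
        have h2 : d * Real.sqrt (a / d) = Real.sqrt (a * d) := by
          rw [← Real.sqrt_sq hd.le, ← Real.sqrt_mul (by positivity)]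
          congr 1
          field_simp
          ring
          exact (Real.sq_sqrt (by positivity)).symm
        rw [← h2]
        field_simp

lemma integrable_inv_quad_shift (a d t : ℝ) (ha : 0 < a) (hd : 0 < d) :
    Integrable (fun x : ℝ => (a * (x - t) ^ 2 + d)⁻¹) :=
  (integrable_inv_quad a d ha hd).comp_sub_right t

lemma integral_inv_quad_shift (a d t : ℝ) (ha : 0 < a) (hd : 0 < d) :
    ∫ x : ℝ, (a * (x - t) ^ 2 + d)⁻¹ = π / Real.sqrt (a * d) := by
  rw [integral_sub_right_eq_self (fun x : ℝ => (a * x ^ 2 + d)⁻¹) t]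
  exact integral_inv_quad a d ha hd

theorem lecam_vincze_cauchy (l s : ℝ) (hs : 0 < s) :
    ∫ x : ℝ, (cauchyPdf 0 1 x - cauchyPdf l s x) ^ 2 / (cauchyPdf 0 1 x + cauchyPdf l s x)
      = 2 - 4 * Real.sqrt (s / (l ^ 2 + s ^ 2 + 2 * s + 1)) := by
  have hs1 : (0:ℝ) < s + 1 := by linarith
  set M : ℝ := l ^ 2 + s ^ 2 + 2 * s + 1 with hMdef
  have hM : 0 < M := by nlinarith
  set t : ℝ := l / (s + 1) with htdef
  set d : ℝ := s * M / (s + 1) with hddef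
  have hd : 0 < d := by positivity
  have hpi : (0:ℝ) < π := Real.pi_pos
  have key : ∀ x : ℝ,
      (cauchyPdf 0 1 x - cauchyPdf l s x) ^ 2 / (cauchyPdf 0 1 x + cauchyPdf l s x)
        = π⁻¹ * (1 * (x - 0) ^ 2 + 1)⁻¹ + (s / π) * (1 * (x - l) ^ 2 + s ^ 2)⁻¹
          - 4 * (s / π) * ((s + 1) * (x - t) ^ 2 + d)⁻¹ := by
    intro x
    simp only [cauchyPdf]
    have h1 : (0:ℝ) < 1 ^ 2 + (x - 0) ^ 2 := by positivity
    have h2 : (0:ℝ) < s ^ 2 + (x - l) ^ 2 := by positivity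
    have h3 : (0:ℝ) < (s + 1) * (x - t) ^ 2 + d := by positivity
    have hsum : (0:ℝ) < 1 / (π * (1 ^ 2 + (x - 0) ^ 2)) + s / (π * (s ^ 2 + (x - l) ^ 2)) := by
      positivity
    rw [div_eq_iff (ne_of_gt hsum)]
    have ht : (s + 1) * (x - t) ^ 2 + d = (s + 1) * x ^ 2 - 2 * l * x + (s + s ^ 2 + l ^ 2) := by
      rw [htdef, hddef, hMdef]
      field_simp
      ring
    rw [ht]
    have h3' : (0:ℝ) < (s + 1) * x ^ 2 - 2 * l * x + (s + s ^ 2 + l ^ 2) := by rw [← ht]; exact h3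
    generalize hQ : (s + 1) * x ^ 2 - 2 * l * x + (s + s ^ 2 + l ^ 2) = Q at h3' ⊢
    have n3 := h3'.ne'
    field_simp
    rw [← hQ]
    ring
  have iA : Integrable (fun x : ℝ => π⁻¹ * (1 * (x - 0) ^ 2 + 1)⁻¹) :=
    (integrable_inv_quad_shift 1 1 0 one_pos one_pos).const_mul _
  have iB : Integrable (fun x : ℝ => (s / π) * (1 * (x - l) ^ 2 + s ^ 2)⁻¹) :=
    (integrable_inv_quad_shift 1 (s ^ 2) l one_pos (by positivity)).const_mul _
  have iC : Integrable (fun x : ℝ => 4 * (s / π) * ((s + 1) * (x - t) ^ 2 + d)⁻¹) :=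
    (integrable_inv_quad_shift (s + 1) d t hs1 hd).const_mul _
  calc ∫ x : ℝ, (cauchyPdf 0 1 x - cauchyPdf l s x) ^ 2 / (cauchyPdf 0 1 x + cauchyPdf l s x)
      = ∫ x : ℝ, (π⁻¹ * (1 * (x - 0) ^ 2 + 1)⁻¹ + (s / π) * (1 * (x - l) ^ 2 + s ^ 2)⁻¹
          - 4 * (s / π) * ((s + 1) * (x - t) ^ 2 + d)⁻¹) := by
        congr 1; ext x; exact key x
    _ = (∫ x : ℝ, π⁻¹ * (1 * (x - 0) ^ 2 + 1)⁻¹)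
          + (∫ x : ℝ, (s / π) * (1 * (x - l) ^ 2 + s ^ 2)⁻¹)
          - ∫ x : ℝ, 4 * (s / π) * ((s + 1) * (x - t) ^ 2 + d)⁻¹ := by
        have iAB : Integrable (fun x : ℝ => π⁻¹ * (1 * (x - 0) ^ 2 + 1)⁻¹
            + (s / π) * (1 * (x - l) ^ 2 + s ^ 2)⁻¹) := iA.add iB
        rw [integral_sub iAB iC, integral_add iA iB]
    _ = π⁻¹ * (π / Real.sqrt (1 * 1)) + (s / π) * (π / Real.sqrt (1 * s ^ 2))
          - 4 * (s / π) * (π / Real.sqrt ((s + 1) * d)) := by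
        rw [integral_const_mul, integral_const_mul, integral_const_mul,
          integral_inv_quad_shift 1 1 0 one_pos one_pos,
          integral_inv_quad_shift 1 (s ^ 2) l one_pos (by positivity),
          integral_inv_quad_shift (s + 1) d t hs1 hd]
    _ = 2 - 4 * Real.sqrt (s / M) := by
        have e1 : Real.sqrt (1 * 1) = 1 := by simp
        have e2 : Real.sqrt (1 * s ^ 2) = s := by
          rw [one_mul, Real.sqrt_sq hs.le]
        have e3 : Real.sqrt ((s + 1) * d) = Real.sqrt (s * M) := by
          congr 1
          rw [hddef]
          field_simp
        have e4 : s / Real.sqrt (s * M) = Real.sqrt (s / M) := by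
          rw [Real.sqrt_div hs.le, Real.sqrt_mul hs.le, ← div_div, Real.div_sqrt]
        rw [e1, e2, e3]
        have hsM : (0:ℝ) < Real.sqrt (s * M) := by positivity
        field_simp
        have hA : Real.sqrt (s * M) * Real.sqrt (s / M) = s := by
          rw [← e4]; field_simp
        have hB : Real.sqrt s ^ 2 = s := Real.sq_sqrt hs.le
        linear_combination 4 * hA
end

section
/- For every integer a ≥ 2 there exists a polynomial J_a of degree a-1 with rational coefficients and constant term 1 such that for all z, w in the upper half plane, ∫_ℝ p_z(x)^a * p_w(x)^{1-a} dx = J_a(χ(z,w)), where χ(z,w) = |z-w|^2/(2*Im(z)*Im(w)). -/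
open MeasureTheory Real

noncomputable def cauchyPdfC (θ : ℂ) (x : ℝ) : ℝ :=
  θ.im / (Real.pi * ((x - θ.re) ^ 2 + θ.im ^ 2))

noncomputable def chi (z w : ℂ) : ℝ := ‖z - w‖ ^ 2 / (2 * z.im * w.im)


section CauchyAux
open Finset intervalIntegral


lemma odd_integral {c : ℝ} {f : ℝ → ℝ} (hf : ∀ x, f (-x) = - f x) :
    ∫ x in (-c)..c, f x = 0 := by
  have h := intervalIntegral.integral_comp_neg f (a := -c) (b := c)
  simp only [hf, intervalIntegral.integral_neg, neg_neg] at h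
  linarith [h]

lemma cos_pow_pi (m : ℕ) :
    ∫ x in (0:ℝ)..π, cos x ^ m = ∫ x in (-(π/2))..(π/2), (-sin x) ^ m := by
  have h := intervalIntegral.integral_comp_add_right (fun x => cos x ^ m) (π/2)
    (a := -(π/2)) (b := π/2)
  simp only [cos_add_pi_div_two] at h
  norm_num at h
  rw [← h]

lemma two_pi_from_pi (m : ℕ) :
    ∫ x in (0:ℝ)..(2*π), cos x ^ m = 2 * ∫ x in (0:ℝ)..π, cos x ^ m := by
  have hper : Function.Periodic (fun x : ℝ => cos x ^ m) (2*π) := by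
    intro x; simp [Real.cos_add_two_pi]
  have h1 : ∫ x in (0:ℝ)..(0 + 2*π), cos x ^ m = ∫ x in (-π)..(-π + 2*π), cos x ^ m :=
    hper.intervalIntegral_add_eq 0 (-π)
  have h2 : ∫ x in (-π)..(0:ℝ), cos x ^ m = ∫ x in (0:ℝ)..π, cos x ^ m := by
    have h := intervalIntegral.integral_comp_neg (fun x => cos x ^ m) (a := 0) (b := π)
    simp only [Real.cos_neg, neg_zero] at h
    rw [← h]
  have h3 : (-π : ℝ) + 2*π = π := by ring
  have h4 := intervalIntegral.integral_add_adjacent_intervals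
    (a := -π) (b := 0) (c := π) (f := fun x => cos x ^ m) (μ := volume)
    ((continuous_cos.pow m).intervalIntegrable _ _)
    ((continuous_cos.pow m).intervalIntegrable _ _)
  rw [zero_add] at h1
  rw [h1, h3, ← h4, h2]
  ring

lemma cos_pow_odd (j : ℕ) : ∫ x in (0:ℝ)..(2*π), cos x ^ (2*j+1) = 0 := by
  rw [two_pi_from_pi, cos_pow_pi]
  rw [odd_integral (f := fun x => (-sin x)^(2*j+1)) (by intro x; simp only [Real.sin_neg, neg_neg]; rw [(odd_two_mul_add_one j).neg_pow (Real.sin x), neg_neg])]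
  ring

lemma cos_pow_even (j : ℕ) :
    ∫ x in (0:ℝ)..(2*π), cos x ^ (2*j) = 2 * π * ((2*j).choose j : ℝ) / 4^j := by
  have wallis : ∏ i ∈ Finset.range j, (2*(i:ℝ)+1)/(2*i+2) = ((2*j).choose j : ℝ) / 4^j := by
    induction j with
    | zero => simp
    | succ k ih =>
      rw [Finset.prod_range_succ, ih]
      have h := Nat.succ_mul_centralBinom_succ k
      have h' : ((k:ℝ)+1) * ((2*(k+1)).choose (k+1) : ℝ) = 2*(2*k+1) * ((2*k).choose k : ℝ) := by
        have := congrArg (fun m : ℕ => (m : ℝ)) h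
        push_cast [Nat.centralBinom] at this
        linarith [this]
      field_simp
      linear_combination (-2*(4:ℝ)^k) * h'
  rw [two_pi_from_pi, cos_pow_pi]
  -- ∫_{-π/2}^{π/2} (-sin)^{2j} = ∫_{-π/2}^{π/2} sin^{2j} = 2 ∫_0^{π/2} sin^{2j}
  have heven : ∀ x : ℝ, (-sin x)^(2*j) = sin x ^ (2*j) := by
    intro x; rw [neg_pow, pow_mul, neg_one_sq, one_pow, one_mul]
  rw [intervalIntegral.integral_congr (fun x _ => heven x)]
  -- split -π/2..π/2 = (-π/2..0) + (0..π/2)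
  have h4 := intervalIntegral.integral_add_adjacent_intervals
    (a := -(π/2)) (b := 0) (c := π/2) (f := fun x => sin x ^ (2*j)) (μ := volume)
    ((continuous_sin.pow _).intervalIntegrable _ _)
    ((continuous_sin.pow _).intervalIntegrable _ _)
  have h5 : ∫ x in (-(π/2))..(0:ℝ), sin x ^ (2*j) = ∫ x in (0:ℝ)..(π/2), sin x ^ (2*j) := by
    have h := intervalIntegral.integral_comp_neg (fun x => sin x ^ (2*j)) (a := 0) (b := π/2)
    simp only [Real.sin_neg, neg_zero] at h
    rw [← h]
    exact intervalIntegral.integral_congr (fun x _ => heven x)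
  have h7 := intervalIntegral.integral_add_adjacent_intervals
    (a := 0) (b := π/2) (c := π) (f := fun x => sin x ^ (2*j)) (μ := volume)
    ((continuous_sin.pow _).intervalIntegrable _ _)
    ((continuous_sin.pow _).intervalIntegrable _ _)
  have h8 : ∫ x in (π/2)..π, sin x ^ (2*j) = ∫ x in (0:ℝ)..(π/2), sin x ^ (2*j) := by
    have h := intervalIntegral.integral_comp_sub_left (fun x => sin x ^ (2*j)) π
      (a := 0) (b := π/2)
    simp only [Real.sin_pi_sub] at h
    have e1 : π - π/2 = π/2 := by ring
    rw [e1, sub_zero] at h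
    exact h.symm
  have h9 := integral_sin_pow_even (n := j)
  rw [wallis] at h9
  linear_combination (-2)*h4 + 2*h5 + 2*h7 + (-2)*h8 + 2*h9

lemma sum_even_split (T : ℕ → ℝ) (k : ℕ) :
    ∑ m ∈ Finset.range (2*k), T m
      = ∑ j ∈ Finset.range k, T (2*j) + ∑ j ∈ Finset.range k, T (2*j+1) := by
  induction k with
  | zero => simp
  | succ i ih =>
    have h2 : 2*(i+1) = (2*i) + 1 + 1 := by ring
    rw [h2, Finset.sum_range_succ, Finset.sum_range_succ, ih,
      Finset.sum_range_succ, Finset.sum_range_succ]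
    ring

lemma cauchy_int (n : ℕ) (lz sz lw sw χ : ℝ) (hsz : 0 < sz) (hsw : 0 < sw)
    (hχ : χ = ((lz-lw)^2+(sz-sw)^2)/(2*sz*sw)) :
    ∫ x : ℝ, (sz/(π*((x-lz)^2+sz^2)))^(n+1) * ((sw/(π*((x-lw)^2+sw^2)))^n)⁻¹
      = ∑ j ∈ Finset.range (n+1),
        ((n.choose (2*j) : ℝ) * ((2*j).choose j) / 4^j) *
          ((1+χ)^(n-2*j) * (χ^2+2*χ)^j) := by
  have hπ : (0:ℝ) < π := Real.pi_pos
  set l := lz - lw with hl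
  set A := (l^2 + sw^2 - sz^2)/(2*sz*sw) with hA'
  set B := l/sw with hB'
  set u : ℂ := ⟨A, B⟩ with hu
  set R := ‖u‖ with hR'
  set δ := Complex.arg u with hδ'
  have hR2 : R^2 = χ^2 + 2*χ := by
    rw [hR', Complex.sq_norm, hu, Complex.normSq_mk, hχ, hA', hB', hl]
    field_simp
    ring
  have hAc : R * Real.cos δ = A := by
    rw [hR', hδ']; exact Complex.norm_mul_cos_arg u
  have hBc : R * Real.sin δ = B := by
    rw [hR', hδ']; exact Complex.norm_mul_sin_arg u
  set Cc := 1 + χ with hCc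
  set s : Set ℝ := Set.Ioo (-(π/2)) (π/2) with hs
  set g : ℝ → ℝ :=
    fun x => (sz/(π*((x-lz)^2+sz^2)))^(n+1) * ((sw/(π*((x-lw)^2+sw^2)))^n)⁻¹ with hg
  set f : ℝ → ℝ := fun φ => lz + sz * tan φ with hf
  -- change of variables
  have himg : f '' s = Set.univ := by
    have : f = (fun y => lz + sz * y) ∘ tan := rfl
    rw [this, Set.image_comp, hs, Real.image_tan_Ioo, Set.image_univ]
    apply Set.eq_univ_of_forall
    intro x
    exact ⟨(x - lz)/sz, by field_simp; ring⟩
  have hderiv : ∀ φ ∈ s, HasDerivWithinAt f (sz / cos φ^2) s φ := by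
    intro φ hφ
    have hc : cos φ ≠ 0 := (Real.cos_pos_of_mem_Ioo hφ).ne'
    have h := ((Real.hasDerivAt_tan hc).const_mul sz).const_add lz
    have : sz * (1 / cos φ ^ 2) = sz / cos φ^2 := by ring
    rw [this] at h
    exact h.hasDerivWithinAt
  have hinj : Set.InjOn f s := by
    intro x hx y hy hxy
    have h1 : tan x = tan y := by
      have := hxy
      simp only [hf] at this
      have h2 : sz * tan x = sz * tan y := by linarith
      exact mul_left_cancel₀ hsz.ne' h2
    exact Real.injOn_tan hx hy h1
  have cov := MeasureTheory.integral_image_eq_integral_abs_deriv_smul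
    measurableSet_Ioo hderiv hinj g
  rw [himg, MeasureTheory.setIntegral_univ] at cov
  -- pointwise identity on s
  have hpt : ∀ φ ∈ s, |sz / cos φ^2| • g (f φ)
      = (1/π) * (Cc + A * cos (2*φ) + B * sin (2*φ))^n := by
    intro φ hφ
    have hc : 0 < cos φ := Real.cos_pos_of_mem_Ioo hφ
    have hc' : cos φ ≠ 0 := hc.ne'
    have hpy : sin φ ^ 2 = 1 - cos φ ^ 2 := by
      have := Real.sin_sq_add_cos_sq φ; linarith
    have habs : |sz / cos φ^2| = sz / cos φ^2 := abs_of_pos (by positivity)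
    rw [habs, smul_eq_mul]
    simp only [hg, hf]
    have h1 : (lz + sz * tan φ - lz)^2 + sz^2 = sz^2 / cos φ^2 := by
      rw [Real.tan_eq_sin_div_cos]
      field_simp
      linear_combination sz^2 * (Real.sin_sq_add_cos_sq φ)
    have hD : 0 < (lz + sz * tan φ - lw)^2 + sw^2 := by positivity
    set Dx := (lz + sz * tan φ - lw)^2 + sw^2 with hDx
    clear_value Dx
    have h2 : Cc + A * cos (2*φ) + B * sin (2*φ) = cos φ^2 * Dx / (sz*sw) := by
      rw [Real.cos_two_mul, Real.sin_two_mul, hDx, Real.tan_eq_sin_div_cos,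
        hCc, hχ, hA', hB', hl]
      field_simp
      linear_combination (-2*sz^2) * (Real.sin_sq_add_cos_sq φ)
    rw [h1, h2]
    have h3 : sz / (π * (sz^2 / cos φ^2)) = cos φ^2 / (π * sz) := by
      field_simp
    rw [h3]
    rw [← inv_pow]
    have h4 : (sw / (π * Dx))⁻¹ = π * Dx / sw := by
      field_simp
    rw [h4]
    field_simp
    ring_nf
    field_simp
    rw [← mul_pow, mul_one_div_cancel hπ.ne', one_pow]
  rw [MeasureTheory.setIntegral_congr_fun measurableSet_Ioo hpt] at cov
  rw [cov]
  rw [← MeasureTheory.integral_Ioc_eq_integral_Ioo,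
    ← intervalIntegral.integral_of_le (by linarith : -(π/2) ≤ π/2)]
  -- pull out 1/π
  rw [intervalIntegral.integral_const_mul]
  -- substitution ψ = 2 φ
  have hsub := intervalIntegral.integral_comp_mul_left
    (f := fun ψ => (Cc + A * cos ψ + B * sin ψ)^n) (a := -(π/2)) (b := π/2)
    (c := (2:ℝ)) two_ne_zero
  have he1 : (2:ℝ) * -(π/2) = -π := by ring
  have he2 : (2:ℝ) * (π/2) = π := by ring
  rw [he1, he2] at hsub
  rw [hsub, smul_eq_mul]
  -- phase shift
  have hphase : ∀ ψ : ℝ, Cc + A * cos ψ + B * sin ψ = Cc + R * cos (ψ - δ) := by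
    intro ψ
    rw [Real.cos_sub]
    have : R * (cos ψ * cos δ + sin ψ * sin δ)
        = (R * cos δ) * cos ψ + (R * sin δ) * sin ψ := by ring
    rw [this, hAc, hBc]
    ring
  have hcongr : ∫ ψ in (-π)..π, (Cc + A * cos ψ + B * sin ψ)^n
      = ∫ ψ in (-π)..π, (fun t => (Cc + R * cos t)^n) (ψ - δ) := by
    apply intervalIntegral.integral_congr
    intro ψ _
    simp only
    rw [hphase ψ]
  rw [hcongr, intervalIntegral.integral_comp_sub_right (fun t => (Cc + R * cos t)^n) δ]
  -- periodicity
  have hper : Function.Periodic (fun t => (Cc + R * cos t)^n) (2*π) := by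
    intro x; simp [Real.cos_add_two_pi]
  have hperiodic : ∫ t in (-π - δ)..(π - δ), (Cc + R * cos t)^n
      = ∫ t in (0:ℝ)..(2*π), (Cc + R * cos t)^n := by
    have h := hper.intervalIntegral_add_eq (-π - δ) 0
    have e1 : -π - δ + 2*π = π - δ := by ring
    rw [e1, zero_add] at h
    exact h
  rw [hperiodic]
  -- binomial expansion
  have hexp : ∀ t : ℝ, (Cc + R * cos t)^n
      = ∑ m ∈ Finset.range (n+1), (R * cos t)^m * Cc^(n-m) * (n.choose m) := by
    intro t
    rw [add_comm Cc (R * cos t)]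
    exact add_pow (R * cos t) Cc n
  rw [intervalIntegral.integral_congr (fun t _ => hexp t)]
  rw [intervalIntegral.integral_finset_sum (μ := volume) (fun m _ => by
    apply Continuous.intervalIntegrable; fun_prop)]
  -- pull constants in each term
  set T : ℕ → ℝ := fun m =>
    R^m * Cc^(n-m) * (n.choose m) * ∫ t in (0:ℝ)..(2*π), cos t ^ m with hT
  have hterm : ∀ m ∈ Finset.range (n+1),
      (∫ t in (0:ℝ)..(2*π), (R * cos t)^m * Cc^(n-m) * (n.choose m))
        = T m := by
    intro m _
    have e : ∀ t:ℝ, (R * cos t)^m * Cc^(n-m) * (n.choose m : ℝ)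
        = (R^m * Cc^(n-m) * (n.choose m : ℝ)) * cos t ^ m := by
      intro t; rw [mul_pow]; ring
    rw [intervalIntegral.integral_congr (fun t _ => e t),
      intervalIntegral.integral_const_mul, hT]
  rw [Finset.sum_congr rfl hterm]
  have hTodd : ∀ j : ℕ, T (2*j+1) = 0 := by
    intro j; rw [hT]; simp only; rw [cos_pow_odd j]; ring
  have hTbig : ∀ m, n < m → T m = 0 := by
    intro m hm
    rw [hT]; simp only
    rw [Nat.choose_eq_zero_of_lt hm]
    simp
  have hsum : ∑ m ∈ Finset.range (n+1), T m = ∑ j ∈ Finset.range (n+1), T (2*j) := by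
    rw [Finset.sum_subset (Finset.range_subset_range.mpr (by omega : n+1 ≤ 2*(n+1)))
      (fun m hmt hms => hTbig m (by
        simp only [Finset.mem_range] at hmt hms; omega))]
    rw [sum_even_split T (n+1)]
    simp [hTodd]
  rw [hsum]
  -- final arithmetic
  rw [Finset.mul_sum, Finset.mul_sum]
  apply Finset.sum_congr rfl
  intro j _
  rw [hT]
  simp only
  rw [cos_pow_even j, pow_mul, hR2]
  field_simp

end CauchyAux

theorem powerChi_polynomial (a : ℕ) (ha : 2 ≤ a) :
    ∃ J : Polynomial ℚ, J.natDegree = a - 1 ∧ J.coeff 0 = 1 ∧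
      ∀ z w : ℂ, 0 < z.im → 0 < w.im →
        ∫ x : ℝ, cauchyPdfC z x ^ (a : ℤ) * cauchyPdfC w x ^ ((1 : ℤ) - a)
          = Polynomial.aeval (chi z w) J := by
  obtain ⟨n, rfl⟩ : ∃ n, a = n + 1 := ⟨a - 1, by omega⟩
  classical
  set J : Polynomial ℚ := ∑ j ∈ Finset.range (n/2+1),
    Polynomial.C (((n.choose (2*j) : ℚ) * ((2*j).choose j)) / 4^j) *
      ((1 + Polynomial.X)^(n - 2*j) * (Polynomial.X^2 + 2*Polynomial.X)^j) with hJ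
  have hm1 : (1 + Polynomial.X : Polynomial ℚ).Monic := by
    simpa [add_comm] using Polynomial.monic_X_add_C (1:ℚ)
  have hm2 : (Polynomial.X^2 + 2*Polynomial.X : Polynomial ℚ).Monic := by
    monicity!
  have hdeg1 : (1 + Polynomial.X : Polynomial ℚ).natDegree = 1 := by compute_degree!
  have hdeg2 : (Polynomial.X^2 + 2*Polynomial.X : Polynomial ℚ).natDegree = 2 := by
    compute_degree!
  have hMdeg : ∀ j, 2*j ≤ n →
      ((1 + Polynomial.X : Polynomial ℚ)^(n - 2*j)
        * (Polynomial.X^2 + 2*Polynomial.X)^j).natDegree = n := by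
    intro j hj
    rw [Polynomial.Monic.natDegree_mul (hm1.pow _) (hm2.pow _),
      Polynomial.natDegree_pow, Polynomial.natDegree_pow, hdeg1, hdeg2]
    omega
  have hcoeffn : J.coeff n = ∑ j ∈ Finset.range (n/2+1),
      ((n.choose (2*j) : ℚ) * ((2*j).choose j)) / 4^j := by
    rw [hJ, Polynomial.finset_sum_coeff]
    apply Finset.sum_congr rfl
    intro j hj
    have hj' : 2*j ≤ n := by
      have := Finset.mem_range.mp hj; omega
    rw [Polynomial.coeff_C_mul]
    have hone := Polynomial.Monic.coeff_natDegree ((hm1.pow (n-2*j)).mul (hm2.pow j))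
    rw [hMdeg j hj'] at hone
    rw [hone, mul_one]
  have hcpos : (1:ℚ) ≤ J.coeff n := by
    rw [hcoeffn]
    have h0 : ((n.choose (2*0) : ℚ) * ((2*0).choose 0)) / 4^0 = 1 := by norm_num
    calc (1:ℚ) = ((n.choose (2*0) : ℚ) * ((2*0).choose 0)) / 4^0 := h0.symm
      _ ≤ _ := Finset.single_le_sum (f := fun j => ((n.choose (2*j) : ℚ) * ((2*j).choose j)) / 4^j)
          (fun i _ => by positivity) (Finset.mem_range.mpr (by omega))
  refine ⟨J, ?_, ?_, ?_⟩
  · -- natDegree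
    simp only [Nat.add_sub_cancel]
    apply le_antisymm
    · rw [hJ]
      apply Polynomial.natDegree_sum_le_of_forall_le
      intro j hj
      have hj' : 2*j ≤ n := by have := Finset.mem_range.mp hj; omega
      apply le_trans (Polynomial.natDegree_mul_le)
      rw [Polynomial.natDegree_C, hMdeg j hj']
      omega
    · exact Polynomial.le_natDegree_of_ne_zero (by intro h; rw [h] at hcpos; norm_num at hcpos)
  · -- coeff 0
    rw [Polynomial.coeff_zero_eq_eval_zero, hJ, Polynomial.eval_finset_sum]
    rw [Finset.sum_eq_single 0]
    · simp
    · intro b _ hb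
      simp [Polynomial.eval_mul, Polynomial.eval_pow, zero_pow hb]
    · intro h; exact absurd (Finset.mem_range.mpr (by omega)) h
  · -- the integral formula
    intro z w hz hw
    have hχ : chi z w = ((z.re-w.re)^2+(z.im-w.im)^2)/(2*z.im*w.im) := by
      rw [chi, Complex.sq_norm, Complex.normSq_apply, Complex.sub_re, Complex.sub_im]
      ring_nf
    have hform := cauchy_int n z.re z.im w.re w.im (chi z w) hz hw hχ
    have hint : (fun x : ℝ => cauchyPdfC z x ^ ((n+1 : ℕ) : ℤ) * cauchyPdfC w x ^ ((1:ℤ) - (n+1 : ℕ)))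
        = fun x : ℝ => (z.im/(π*((x-z.re)^2+z.im^2)))^(n+1) * ((w.im/(π*((x-w.re)^2+w.im^2)))^n)⁻¹ := by
      funext x
      rw [show ((1:ℤ) - ((n+1:ℕ):ℤ)) = -(n:ℤ) by push_cast; ring]
      rw [zpow_neg, zpow_natCast, zpow_natCast]
      rfl
    rw [hint, hform]
    -- now identify sums
    have hshrink : ∑ j ∈ Finset.range (n+1),
        ((n.choose (2*j) : ℝ) * ((2*j).choose j) / 4^j) *
          ((1+chi z w)^(n-2*j) * ((chi z w)^2+2*(chi z w))^j)
        = ∑ j ∈ Finset.range (n/2+1),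
        ((n.choose (2*j) : ℝ) * ((2*j).choose j) / 4^j) *
          ((1+chi z w)^(n-2*j) * ((chi z w)^2+2*(chi z w))^j) := by
      apply (Finset.sum_subset (Finset.range_subset_range.mpr (by omega)) ?_).symm
      intro j hjt hjs
      have h1 : n < 2*j := by
        simp only [Finset.mem_range] at hjt hjs; omega
      rw [Nat.choose_eq_zero_of_lt h1]
      simp
    rw [hshrink, hJ, map_sum]
    apply Finset.sum_congr rfl
    intro j hj
    simp only [map_mul, map_add, map_pow, map_one, map_ofNat, Polynomial.aeval_C,
      Polynomial.aeval_X]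
    push_cast
    field_simp
    norm_num
    ring
end

section
/- For all z, w in the upper half plane, ∫_ℝ p_z(x)^2 / p_w(x) dx = 1 + χ(z,w), and ∫_ℝ p_z(x)^3 / p_w(x)^2 dx = (3*(χ(z,w)+1)^2 - 1)/2, where χ(z,w) = |z-w|^2/(2*Im(z)*Im(w)). -/
open MeasureTheory Real Filter Topology Set

private lemma tendsto_ratlin_base (s p q : ℝ) (hs : 0 < s) (n : ℕ) (hn : 1 ≤ n) :
    Tendsto (fun x : ℝ => (p*x+q)/(x^2+s^2)^n) atTop (𝓝 0) := by
  refine squeeze_zero_norm' (a := fun x : ℝ => (|p|+|q|)/x) ?_ ?_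
  · filter_upwards [eventually_ge_atTop (1:ℝ)] with x hx
    have hx0 : (0:ℝ) < x := by linarith
    have h1 : |p*x+q| ≤ (|p|+|q|)*x := by
      calc |p*x+q| ≤ |p*x| + |q| := abs_add_le _ _
        _ = |p| * x + |q| := by rw [abs_mul, abs_of_pos hx0]
        _ ≤ |p| * x + |q| * x := by nlinarith [abs_nonneg q]
        _ = (|p|+|q|)*x := by ring
    have h2 : x^2 ≤ (x^2+s^2)^n := by
      calc x^2 ≤ x^2+s^2 := by nlinarith
        _ ≤ (x^2+s^2)^n := le_self_pow₀ (by nlinarith) (by omega)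
    have hd : (0:ℝ) < (x^2+s^2)^n := by positivity
    rw [norm_div, norm_pow]
    have : ‖x^2+s^2‖^n = (x^2+s^2)^n := by rw [Real.norm_eq_abs, abs_of_pos (by nlinarith)]
    rw [this, div_le_div_iff₀ hd hx0]
    calc ‖p*x+q‖ * x ≤ ((|p|+|q|)*x) * x := by
          apply mul_le_mul_of_nonneg_right h1 hx0.le
      _ = (|p|+|q|)*x^2 := by ring
      _ ≤ (|p|+|q|)*(x^2+s^2)^n := by
          apply mul_le_mul_of_nonneg_left h2 (by positivity)
  · exact tendsto_const_nhds.div_atTop tendsto_id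

private lemma tendsto_ratlin_atTop (s p q l : ℝ) (hs : 0 < s) (n : ℕ) (hn : 1 ≤ n) :
    Tendsto (fun x : ℝ => (p*(x-l)+q)/((x-l)^2+s^2)^n) atTop (𝓝 0) := by
  have h := (tendsto_ratlin_base s p q hs n hn).comp
    (tendsto_atTop_add_const_right atTop (-l) tendsto_id)
  refine h.congr fun x => ?_
  simp [Function.comp, sub_eq_add_neg]

private lemma tendsto_ratlin_atBot (s p q l : ℝ) (hs : 0 < s) (n : ℕ) (hn : 1 ≤ n) :
    Tendsto (fun x : ℝ => (p*(x-l)+q)/((x-l)^2+s^2)^n) atBot (𝓝 0) := by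
  have h := (tendsto_ratlin_atTop s (-p) q (-l) hs n hn).comp tendsto_neg_atBot_atTop
  refine h.congr fun x => ?_
  have e1 : -x - -l = -(x - l) := by ring
  simp only [Function.comp_apply, e1, neg_sq]
  ring_nf

private lemma hasDerivAt_cauchyAux (l s p q r v k : ℝ) (hs : s ≠ 0) (x : ℝ) :
    HasDerivAt (fun y => (p*(y-l)+q)/((y-l)^2+s^2) + (r*(y-l)+v)/((y-l)^2+s^2)^2
        + k * Real.arctan ((y-l)/s))
      ((p*((x-l)^2+s^2) - 2*(x-l)*(p*(x-l)+q))/((x-l)^2+s^2)^2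
       + (r*((x-l)^2+s^2) - 4*(x-l)*(r*(x-l)+v))/((x-l)^2+s^2)^3
       + k * s/((x-l)^2+s^2)) x := by
  have hQ : (0:ℝ) < (x-l)^2+s^2 := by positivity
  have hu : HasDerivAt (fun y : ℝ => y - l) 1 x := (hasDerivAt_id x).sub_const l
  have hQ' : HasDerivAt (fun y : ℝ => (y-l)^2+s^2) (2*(x-l)) x := by
    simpa using ((hu.pow 2).add_const (s^2))
  have h1 : HasDerivAt (fun y : ℝ => (p*(y-l)+q)/((y-l)^2+s^2))
      ((p*((x-l)^2+s^2) - (p*(x-l)+q)*(2*(x-l)))/((x-l)^2+s^2)^2) x := by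
    exact (((hu.const_mul p).add_const q).div hQ' hQ.ne').congr_deriv (by ring)
  have hQ2 : HasDerivAt (fun y : ℝ => ((y-l)^2+s^2)^2) (2*((x-l)^2+s^2)*(2*(x-l))) x := by
    exact (hQ'.pow 2).congr_deriv (by norm_num)
  have h2 : HasDerivAt (fun y : ℝ => (r*(y-l)+v)/((y-l)^2+s^2)^2)
      ((r*((x-l)^2+s^2)^2 - (r*(x-l)+v)*(2*((x-l)^2+s^2)*(2*(x-l))))/(((x-l)^2+s^2)^2)^2) x := by
    exact (((hu.const_mul r).add_const v).div hQ2 (by positivity)).congr_deriv (by ring)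
  have h3 : HasDerivAt (fun y : ℝ => k * Real.arctan ((y-l)/s))
      (k * ((1/(1+((x-l)/s)^2)) * (1/s))) x := by
    have := (Real.hasDerivAt_arctan ((x-l)/s)).comp x (hu.div_const s)
    simpa [div_eq_mul_inv, mul_comm] using this.const_mul k
  have h := (h1.add h2).add h3
  refine h.congr_deriv ?_
  have h1s : (1:ℝ)+((x-l)/s)^2 ≠ 0 := by positivity
  field_simp
  ring

/-- FTC on ℝ for a nonnegative derivative. -/
private lemma integral_real_of_hasDerivAt_of_nonneg {F f : ℝ → ℝ} {A B : ℝ}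
    (hd : ∀ x, HasDerivAt F (f x) x) (hpos : ∀ x, 0 ≤ f x)
    (hbot : Tendsto F atBot (𝓝 A)) (htop : Tendsto F atTop (𝓝 B)) :
    ∫ x, f x = B - A := by
  have hIoi : IntegrableOn f (Ioi 0) :=
    integrableOn_Ioi_deriv_of_nonneg' (fun x _ => hd x) (fun x _ => hpos x) htop
  have hd2 : ∀ x : ℝ, HasDerivAt (fun y => -F (-y)) (f (-x)) x := by
    intro x
    have h := ((hd (-x)).comp x ((hasDerivAt_id x).neg)).neg
    exact h.congr_deriv (by ring)
  have htop2 : Tendsto (fun y : ℝ => -F (-y)) atTop (𝓝 (-A)) :=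
    (hbot.comp tendsto_neg_atTop_atBot).neg
  have hIoi2 : IntegrableOn (fun x => f (-x)) (Ioi 0) :=
    integrableOn_Ioi_deriv_of_nonneg' (fun x _ => hd2 x) (fun x _ => hpos _) htop2
  have hIio : IntegrableOn f (Iio 0) := by
    rw [← (Measure.measurePreserving_neg (volume : Measure ℝ)).integrableOn_comp_preimage
        (Homeomorph.neg ℝ).measurableEmbedding]
    simpa [Function.comp_def, neg_preimage, neg_Iio, neg_zero] using hIoi2
  have hint : Integrable f := by
    rw [← integrableOn_univ, ← Iio_union_Ici (a := (0:ℝ)), integrableOn_union,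
      integrableOn_Ici_iff_integrableOn_Ioi]
    exact ⟨hIio, hIoi⟩
  exact integral_of_hasDerivAt_of_tendsto hd hint hbot htop


private lemma integral_formula (l s p q r v k : ℝ) (hs : 0 < s) (g : ℝ → ℝ)
    (hg : ∀ x, g x = (p*((x-l)^2+s^2) - 2*(x-l)*(p*(x-l)+q))/((x-l)^2+s^2)^2
       + (r*((x-l)^2+s^2) - 4*(x-l)*(r*(x-l)+v))/((x-l)^2+s^2)^3
       + k * s/((x-l)^2+s^2))
    (hpos : ∀ x, 0 ≤ g x) :
    ∫ x, g x = k * π := by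
  set F := fun y => (p*(y-l)+q)/((y-l)^2+s^2) + (r*(y-l)+v)/((y-l)^2+s^2)^2
      + k * Real.arctan ((y-l)/s) with hF
  have hd : ∀ x, HasDerivAt F (g x) x := fun x =>
    (hg x) ▸ hasDerivAt_cauchyAux l s p q r v k hs.ne' x
  have hsub_top : Tendsto (fun x : ℝ => x - l) atTop atTop :=
    (tendsto_atTop_add_const_right atTop (-l) tendsto_id).congr
      (fun x => (sub_eq_add_neg x l).symm)
  have hdiv_top : Tendsto (fun x : ℝ => (x-l)/s) atTop atTop :=
    hsub_top.atTop_div_const hs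
  have hsub_bot : Tendsto (fun x : ℝ => x - l) atBot atBot :=
    (tendsto_atBot_add_const_right atBot (-l) tendsto_id).congr
      (fun x => (sub_eq_add_neg x l).symm)
  have hdiv_bot : Tendsto (fun x : ℝ => (x-l)/s) atBot atBot :=
    hsub_bot.atBot_div_const hs
  have harct_top : Tendsto (fun x : ℝ => Real.arctan ((x-l)/s)) atTop (𝓝 (π/2)) :=
    (Real.tendsto_arctan_atTop.mono_right nhdsWithin_le_nhds).comp hdiv_top
  have harct_bot : Tendsto (fun x : ℝ => Real.arctan ((x-l)/s)) atBot (𝓝 (-(π/2))) :=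
    (Real.tendsto_arctan_atBot.mono_right nhdsWithin_le_nhds).comp hdiv_bot
  have T1t : Tendsto (fun x : ℝ => (p*(x-l)+q)/((x-l)^2+s^2)) atTop (𝓝 0) := by
    simpa using tendsto_ratlin_atTop s p q l hs 1 le_rfl
  have T2t : Tendsto (fun x : ℝ => (r*(x-l)+v)/((x-l)^2+s^2)^2) atTop (𝓝 0) :=
    tendsto_ratlin_atTop s r v l hs 2 (by norm_num)
  have T1b : Tendsto (fun x : ℝ => (p*(x-l)+q)/((x-l)^2+s^2)) atBot (𝓝 0) := by
    simpa using tendsto_ratlin_atBot s p q l hs 1 le_rfl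
  have T2b : Tendsto (fun x : ℝ => (r*(x-l)+v)/((x-l)^2+s^2)^2) atBot (𝓝 0) :=
    tendsto_ratlin_atBot s r v l hs 2 (by norm_num)
  have htop : Tendsto F atTop (𝓝 (k * (π/2))) := by
    have := (T1t.add T2t).add (harct_top.const_mul k)
    simpa using this
  have hbot : Tendsto F atBot (𝓝 (k * (-(π/2)))) := by
    have := (T1b.add T2b).add (harct_bot.const_mul k)
    simpa using this
  rw [integral_real_of_hasDerivAt_of_nonneg hd hpos hbot htop]
  ring


theorem powerChi_two_three (z w : ℂ) (hz : 0 < z.im) (hw : 0 < w.im) :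
    (∫ x : ℝ, cauchyPdfC z x ^ 2 / cauchyPdfC w x) = 1 + chi z w ∧
    (∫ x : ℝ, cauchyPdfC z x ^ 3 / cauchyPdfC w x ^ 2) = (3 * (chi z w + 1) ^ 2 - 1) / 2 := by
  set l := z.re with hl
  set s := z.im with hsd
  set m := w.re with hm
  set t := w.im with htd
  have hs : 0 < s := hz
  have ht : 0 < t := hw
  have hπ : (0:ℝ) < π := Real.pi_pos
  set a := l - m with ha
  set c := a^2 + t^2 with hc
  have habs : ‖z-w‖^2 = a^2 + (s-t)^2 := by
    rw [Complex.sq_norm, Complex.normSq_apply, Complex.sub_re, Complex.sub_im, ← hl, ← hsd,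
      ← hm, ← htd, ha]
    ring
  have hposg : ∀ (θ : ℂ), 0 < θ.im → ∀ x : ℝ, 0 ≤ cauchyPdfC θ x := by
    intro θ hθ x
    unfold cauchyPdfC
    exact div_nonneg hθ.le (by positivity)
  have hchi : chi z w = (a^2 + (s-t)^2) / (2*s*t) := by
    unfold chi
    rw [habs, ← hsd, ← htd]
  constructor
  · rw [integral_formula l s ((c - s^2)/(2*π*t)) (-(a*s^2)/(π*t)) 0 0 ((s^2+c)/(2*π*t*s)) hs _
      ?_ (fun x => div_nonneg (pow_nonneg (hposg z hz x) 2) (hposg w hw x))]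
    · rw [hchi, hc, ha]
      field_simp
      ring
    · intro x
      have hQz : (0:ℝ) < (x-l)^2+s^2 := by positivity
      have hQw : (0:ℝ) < (x-m)^2+t^2 := by positivity
      unfold cauchyPdfC
      rw [← hl, ← hsd, ← hm, ← htd, hc, ha]
      field_simp
      ring
  · rw [integral_formula l s
        (s^3/(π*t^2)*((2*c+4*a^2-2*s^2)/(2*s^2) + 3*((c-s^2)^2-4*a^2*s^2)/(8*s^4)))
        (s^3/(π*t^2)*(-2*a))
        (s^3/(π*t^2)*(((c-s^2)^2-4*a^2*s^2)/(4*s^2)))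
        (s^3/(π*t^2)*(-(4*a*(c-s^2))/4))
        (s^3/(π*t^2)*(1/s + (2*c+4*a^2-2*s^2)/(2*s^3) + 3*((c-s^2)^2-4*a^2*s^2)/(8*s^5))) hs _
      ?_ (fun x => div_nonneg (pow_nonneg (hposg z hz x) 3) (pow_nonneg (hposg w hw x) 2))]
    · rw [hchi, hc, ha]
      field_simp
      ring
    · intro x
      have hQz : (0:ℝ) < (x-l)^2+s^2 := by positivity
      have hQw : (0:ℝ) < (x-m)^2+t^2 := by positivity
      unfold cauchyPdfC
      rw [← hl, ← hsd, ← hm, ← htd, hc, ha]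
      field_simp
      ring
end

section
/- The function d(θ1, θ2) = sqrt( log(1 + χ(θ1,θ2)/2) ), where χ(θ1,θ2) = |θ1-θ2|^2/(2*Im(θ1)*Im(θ2)), is a metric on the upper half plane ℍ; i.e., the square root of the Kullback-Leibler divergence between univariate Cauchy distributions satisfies the triangle inequality, vanishes exactly on the diagonal, and is symmetric. -/
noncomputable def sqrtKL (z w : ℂ) : ℝ := Real.sqrt (Real.log (1 + chi z w / 2))

open Real

/-- Key inequality: `tanh t ^ 2 ≤ 2 * log (cosh t)` for `t ≥ 0`. -/
lemma tanh_sq_le (t : ℝ) (ht : 0 ≤ t) :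
    (Real.sinh t / Real.cosh t) ^ 2 ≤ 2 * Real.log (Real.cosh t) := by
  set F : ℝ → ℝ := fun x => 2 * Real.log (Real.cosh x) - (Real.sinh x / Real.cosh x) ^ 2 with hF
  have hcosh : ∀ x : ℝ, Real.cosh x ≠ 0 := fun x => (Real.cosh_pos x).ne'
  have hderiv : ∀ x : ℝ, HasDerivAt F (2 * (Real.sinh x / Real.cosh x) ^ 3) x := by
    intro x
    have h1 : HasDerivAt (fun y => Real.log (Real.cosh y)) (Real.sinh x / Real.cosh x) x := by
      have := (Real.hasDerivAt_cosh x).log (hcosh x)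
      simpa using this
    have h2 : HasDerivAt (fun y => Real.sinh y / Real.cosh y)
        ((Real.cosh x * Real.cosh x - Real.sinh x * Real.sinh x) / (Real.cosh x) ^ 2) x :=
      (Real.hasDerivAt_sinh x).div (Real.hasDerivAt_cosh x) (hcosh x)
    have h3 : HasDerivAt (fun y => (Real.sinh y / Real.cosh y) ^ 2)
        (2 * (Real.sinh x / Real.cosh x) *
          ((Real.cosh x * Real.cosh x - Real.sinh x * Real.sinh x) / (Real.cosh x) ^ 2)) x := by
      have := h2.fun_pow 2
      simpa [mul_comm, mul_assoc, mul_left_comm] using this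
    have h4 := (h1.const_mul (2 : ℝ)).fun_sub h3
    refine h4.congr_deriv ?_
    symm
    have hc2 : Real.cosh x ^ 2 - Real.sinh x ^ 2 = 1 := Real.cosh_sq_sub_sinh_sq x
    field_simp
    nlinarith [hc2, Real.cosh_pos x]
  have hmono : MonotoneOn F (Set.Ici (0 : ℝ)) := by
    apply monotoneOn_of_deriv_nonneg (convex_Ici 0)
    · exact (Continuous.sub (continuous_const.mul ((Real.continuous_cosh.log hcosh)))
        (((Real.continuous_sinh.div Real.continuous_cosh hcosh)).pow 2)).continuousOn
    · intro x hx
      exact (hderiv x).differentiableAt.differentiableWithinAt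
    · intro x hx
      rw [(hderiv x).deriv]
      have hx0 : 0 < x := by simpa using hx
      have : 0 ≤ Real.sinh x / Real.cosh x :=
        div_nonneg (Real.sinh_nonneg_iff.2 hx0.le) (Real.cosh_pos _).le
      positivity
  have h0 : F 0 = 0 := by simp [hF]
  have := hmono (Set.mem_Ici.2 le_rfl) (Set.mem_Ici.2 ht) ht
  rw [h0] at this
  simpa [hF, sub_nonneg] using this

/-- `t ↦ √(log (cosh t))` is subadditive on nonnegative reals. -/
lemma sqrt_log_cosh_subadd (a b : ℝ) (ha : 0 ≤ a) (hb : 0 ≤ b) :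
    Real.sqrt (Real.log (Real.cosh (a + b))) ≤
      Real.sqrt (Real.log (Real.cosh a)) + Real.sqrt (Real.log (Real.cosh b)) := by
  set La := Real.log (Real.cosh a) with hLa
  set Lb := Real.log (Real.cosh b) with hLb
  have hLa0 : 0 ≤ La := Real.log_nonneg (Real.one_le_cosh a)
  have hLb0 : 0 ≤ Lb := Real.log_nonneg (Real.one_le_cosh b)
  have hca : 0 < Real.cosh a := Real.cosh_pos a
  have hcb : 0 < Real.cosh b := Real.cosh_pos b
  have hta : 0 ≤ Real.sinh a / Real.cosh a := div_nonneg (Real.sinh_nonneg_iff.2 ha) hca.le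
  have htb : 0 ≤ Real.sinh b / Real.cosh b := div_nonneg (Real.sinh_nonneg_iff.2 hb) hcb.le
  -- tanh a ≤ √(2 La)
  have hta2 : Real.sinh a / Real.cosh a ≤ Real.sqrt (2 * La) := by
    rw [← Real.sqrt_sq hta]
    exact Real.sqrt_le_sqrt (tanh_sq_le a ha)
  have htb2 : Real.sinh b / Real.cosh b ≤ Real.sqrt (2 * Lb) := by
    rw [← Real.sqrt_sq htb]
    exact Real.sqrt_le_sqrt (tanh_sq_le b hb)
  -- log cosh(a+b) ≤ La + Lb + 2 √La √Lb
  have hcosh_add : Real.cosh (a + b) =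
      Real.cosh a * Real.cosh b * (1 + (Real.sinh a / Real.cosh a) * (Real.sinh b / Real.cosh b)) := by
    rw [Real.cosh_add]; field_simp
  have hfac_pos : (0:ℝ) < 1 + (Real.sinh a / Real.cosh a) * (Real.sinh b / Real.cosh b) := by
    nlinarith [mul_nonneg hta htb]
  have hlog : Real.log (Real.cosh (a + b)) =
      La + Lb + Real.log (1 + (Real.sinh a / Real.cosh a) * (Real.sinh b / Real.cosh b)) := by
    rw [hcosh_add, Real.log_mul (by positivity) hfac_pos.ne', Real.log_mul hca.ne' hcb.ne']
  have hlog_le : Real.log (1 + (Real.sinh a / Real.cosh a) * (Real.sinh b / Real.cosh b)) ≤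
      (Real.sinh a / Real.cosh a) * (Real.sinh b / Real.cosh b) := by
    have := Real.log_le_sub_one_of_pos hfac_pos
    linarith
  have hprod : (Real.sinh a / Real.cosh a) * (Real.sinh b / Real.cosh b) ≤
      2 * (Real.sqrt La * Real.sqrt Lb) := by
    calc (Real.sinh a / Real.cosh a) * (Real.sinh b / Real.cosh b)
        ≤ Real.sqrt (2 * La) * Real.sqrt (2 * Lb) := mul_le_mul hta2 htb2 htb (Real.sqrt_nonneg _)
      _ = 2 * (Real.sqrt La * Real.sqrt Lb) := by
          rw [Real.sqrt_mul (by norm_num) La, Real.sqrt_mul (by norm_num) Lb]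
          rw [show (Real.sqrt 2 * Real.sqrt La) * (Real.sqrt 2 * Real.sqrt Lb)
              = (Real.sqrt 2 * Real.sqrt 2) * (Real.sqrt La * Real.sqrt Lb) by ring,
            Real.mul_self_sqrt (by norm_num)]
  have key : Real.log (Real.cosh (a + b)) ≤ (Real.sqrt La + Real.sqrt Lb) ^ 2 := by
    have hsq : (Real.sqrt La + Real.sqrt Lb) ^ 2 =
        La + Lb + 2 * (Real.sqrt La * Real.sqrt Lb) := by
      rw [add_sq, Real.sq_sqrt hLa0, Real.sq_sqrt hLb0]; ring
    rw [hsq, hlog]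
    linarith
  calc Real.sqrt (Real.log (Real.cosh (a + b)))
      ≤ Real.sqrt ((Real.sqrt La + Real.sqrt Lb) ^ 2) := Real.sqrt_le_sqrt key
    _ = Real.sqrt La + Real.sqrt Lb := Real.sqrt_sq (by positivity)

/-- Relating `sqrtKL` to the hyperbolic distance. -/
lemma sqrtKL_eq (z w : UpperHalfPlane) :
    sqrtKL (z : ℂ) (w : ℂ) = Real.sqrt 2 * Real.sqrt (Real.log (Real.cosh (dist z w / 2))) := by
  have hchi : chi (z : ℂ) (w : ℂ) = Real.cosh (dist z w) - 1 := by
    rw [UpperHalfPlane.cosh_dist, chi, Complex.dist_eq]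
    simp [UpperHalfPlane.coe_im]
  have hd : (0:ℝ) ≤ dist z w := dist_nonneg
  have hcd : Real.cosh (dist z w) = 2 * Real.cosh (dist z w / 2) ^ 2 - 1 := by
    have : dist z w = 2 * (dist z w / 2) := by ring
    rw [this, Real.cosh_two_mul, Real.cosh_sq]
    ring_nf
    rw [show dist z w * (1/2) = dist z w / 2 by ring]
    nlinarith [Real.cosh_sq_sub_sinh_sq (dist z w / 2)]
  have harg : 1 + chi (z : ℂ) (w : ℂ) / 2 = Real.cosh (dist z w / 2) ^ 2 := by
    rw [hchi, hcd]; ring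
  rw [sqrtKL, harg, show Real.cosh (dist z w / 2) ^ 2 = Real.cosh (dist z w / 2) ^ (2:ℕ) from rfl,
    Real.log_pow]
  push_cast
  rw [← Real.sqrt_mul (by norm_num)]

theorem sqrtKL_is_metric :
    (∀ z w : ℂ, 0 < z.im → 0 < w.im → sqrtKL z w = sqrtKL w z) ∧
    (∀ z w : ℂ, 0 < z.im → 0 < w.im → (sqrtKL z w = 0 ↔ z = w)) ∧
    (∀ z w v : ℂ, 0 < z.im → 0 < w.im → 0 < v.im →
      sqrtKL z v ≤ sqrtKL z w + sqrtKL w v) := by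
  refine ⟨?_, ?_, ?_⟩
  · intro z w hz hw
    unfold sqrtKL chi
    rw [show ‖z - w‖ = ‖w - z‖ by rw [norm_sub_rev],
      show 2 * z.im * w.im = 2 * w.im * z.im by ring]
  · intro z w hz hw
    have hden : 0 < 2 * z.im * w.im := by positivity
    have hchi0 : 0 ≤ chi z w := div_nonneg (by positivity) hden.le
    constructor
    · intro h
      have hlog0 : 0 ≤ Real.log (1 + chi z w / 2) := Real.log_nonneg (by linarith)
      have := Real.sqrt_eq_zero hlog0 |>.1 h
      have hchi : chi z w = 0 := by
        by_contra hc
        have hpos : 0 < chi z w := lt_of_le_of_ne hchi0 (Ne.symm hc)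
        have : 0 < Real.log (1 + chi z w / 2) := Real.log_pos (by linarith)
        linarith
      have habs : ‖z - w‖ ^ 2 = 0 := by
        have := hchi
        rw [chi, div_eq_zero_iff] at this
        rcases this with h | h
        · exact h
        · exact absurd h hden.ne'
      have : z - w = 0 := by
        have := pow_eq_zero_iff (n := 2) (by norm_num) |>.1 habs
        exact norm_eq_zero.1 this
      exact sub_eq_zero.1 this
    · intro h
      subst h
      simp [sqrtKL, chi]
  · intro z w v hz hw hv
    set Z : UpperHalfPlane := ⟨z, hz⟩
    set W : UpperHalfPlane := ⟨w, hw⟩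
    set V : UpperHalfPlane := ⟨v, hv⟩
    have hZ : (Z : ℂ) = z := rfl
    have hW : (W : ℂ) = w := rfl
    have hV : (V : ℂ) = v := rfl
    rw [← hZ, ← hW, ← hV, sqrtKL_eq Z V, sqrtKL_eq Z W, sqrtKL_eq W V]
    rw [← mul_add]
    apply mul_le_mul_of_nonneg_left _ (Real.sqrt_nonneg 2)
    have htri : dist Z V / 2 ≤ dist Z W / 2 + dist W V / 2 := by
      linarith [dist_triangle Z W V]
    calc Real.sqrt (Real.log (Real.cosh (dist Z V / 2)))
        ≤ Real.sqrt (Real.log (Real.cosh (dist Z W / 2 + dist W V / 2))) := by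
          apply Real.sqrt_le_sqrt
          apply Real.log_le_log (Real.cosh_pos _)
          rw [Real.cosh_le_cosh]
          rw [abs_of_nonneg (by positivity), abs_of_nonneg (by positivity)]
          exact htri
      _ ≤ _ := sqrt_log_cosh_subadd _ _ (by positivity) (by positivity)
end

section
/- For every exponent α with 1/2 < α ≤ 1, the function (θ1, θ2) ↦ (log(1 + χ(θ1,θ2)/2))^α on ℍ × ℍ, where χ(θ1,θ2) = |θ1-θ2|^2/(2*Im(θ1)*Im(θ2)), fails the triangle inequality, i.e., it is not a metric on the upper half plane. -/
theorem klPow_not_metric (α : ℝ) (hα₁ : 1 / 2 < α) (hα₂ : α ≤ 1) :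
    ∃ z w v : ℂ, 0 < z.im ∧ 0 < w.im ∧ 0 < v.im ∧
      (Real.log (1 + chi z w / 2)) ^ α + (Real.log (1 + chi w v / 2)) ^ α
        < (Real.log (1 + chi z v / 2)) ^ α := by
  have hα0 : 0 < α := by linarith
  set c : ℝ := (2:ℝ) ^ (α⁻¹) with hc
  have hinv1 : (1:ℝ) ≤ α⁻¹ := by
    rw [le_inv_comm₀ one_pos hα0]; simpa using hα₂
  have hinv2 : α⁻¹ < 2 := by
    rw [inv_lt_comm₀ hα0 two_pos]; linarith
  have hc2 : 2 ≤ c := by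
    calc (2:ℝ) = 2 ^ (1:ℝ) := by norm_num
    _ ≤ c := Real.rpow_le_rpow_of_exponent_le (by norm_num) hinv1
  have hc4 : c < 4 := by
    calc c < 2 ^ (2:ℝ) := Real.rpow_lt_rpow_of_exponent_lt (by norm_num) hinv2
    _ = 4 := by norm_num
  set s : ℝ := (4 - c) / 16 with hs
  have hs0 : 0 < s := by rw [hs]; linarith
  set t : ℝ := 2 * Real.sqrt s with ht
  have ht0 : 0 < t := by positivity
  have ht2 : t ^ 2 = 4 * s := by
    rw [ht, mul_pow, Real.sq_sqrt hs0.le]; ring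
  refine ⟨Complex.I - (t:ℂ), Complex.I, Complex.I + (t:ℂ), by simp, by simp, by simp, ?_⟩
  have habs1 : chi (Complex.I - (t:ℂ)) Complex.I = t ^ 2 / 2 := by
    simp [chi, Complex.norm_real, abs_of_pos ht0]
  have habs2 : chi Complex.I (Complex.I + (t:ℂ)) = t ^ 2 / 2 := by
    have : Complex.I - (Complex.I + (t:ℂ)) = -(t:ℂ) := by ring
    simp [chi, this, Complex.norm_real, abs_of_pos ht0]
  have habs3 : chi (Complex.I - (t:ℂ)) (Complex.I + (t:ℂ)) = 2 * t ^ 2 := by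
    have : Complex.I - (t:ℂ) - (Complex.I + (t:ℂ)) = -(2 * (t:ℂ)) := by ring
    simp [chi, this, Complex.norm_real, abs_of_pos ht0]
    ring
  rw [habs1, habs2, habs3]
  have e1 : 1 + t ^ 2 / 2 / 2 = 1 + s := by rw [ht2]; ring
  have e2 : 1 + 2 * t ^ 2 / 2 = 1 + 4 * s := by rw [ht2]; ring
  rw [e1, e2]
  set L1 : ℝ := Real.log (1 + s) with hL1
  set L2 : ℝ := Real.log (1 + 4 * s) with hL2
  have hL1pos : 0 < L1 := Real.log_pos (by linarith)
  have hL2pos : 0 < L2 := Real.log_pos (by linarith)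
  -- key: c * L1 < L2
  have key : c * L1 < L2 := by
    have h1 : L1 ≤ s := by
      have := Real.log_le_sub_one_of_pos (show (0:ℝ) < 1 + s by linarith)
      linarith
    have h2 : 4 * s / (1 + 4 * s) ≤ L2 := by
      have := Real.one_sub_inv_le_log_of_pos (show (0:ℝ) < 1 + 4 * s by linarith)
      have hne : (1 + 4 * s) ≠ 0 := by positivity
      have : 1 - (1 + 4 * s)⁻¹ ≤ L2 := this
      have heq : 1 - (1 + 4 * s)⁻¹ = 4 * s / (1 + 4 * s) := by
        field_simp
        ring
      linarith [heq ▸ this]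
    have h3 : c * s < 4 * s / (1 + 4 * s) := by
      rw [lt_div_iff₀ (by positivity), hs]
      have hd : 0 < 4 - c := by linarith
      have hq : 0 < (c - 4) ^ 2 := by nlinarith
      nlinarith [mul_pos hd hq]
    calc c * L1 ≤ c * s := by nlinarith
    _ < 4 * s / (1 + 4 * s) := h3
    _ ≤ L2 := h2
  have hrw : L1 ^ α + L1 ^ α = (c * L1) ^ α := by
    rw [Real.mul_rpow (by positivity) hL1pos.le, hc,
      ← Real.rpow_mul (by norm_num : (0:ℝ) ≤ 2),
      inv_mul_cancel₀ (ne_of_gt hα0), Real.rpow_one]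
    ring
  rw [hrw]
  exact Real.rpow_lt_rpow (by positivity) key hα0
end
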